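/- arXiv:1905.00555 — 11 statements merged into one kernel-verified Lean document; each statement's English description precedes it below -/
import Mathlib

section
/- Define τ_ES = 1/(b+c), τ_EP = 1/(d+f), p = c/(b+c), q = d/(d+f), T₁ = (τ_ES + p·τ_EP)/(1 − p·q) and T₂ = (τ_EP + q·τ_ES)/(1 − p·q). Then the unique stationary distribution of the chain satisfies π_E = 1/(1 + a·T₁ + g·T₂); equivalently, the sequestered fraction R = π_ES + π_EP satisfies R = 1 − 1/(1 + a·T₁ + g·T₂). -/
/-- A probability vector `(pE, pES, pEP)` is a stationary distribution of the
three-state cycle chain with rates `a,b,c,d,f,g` if its entries are nonnegative,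
sum to 1, and satisfy the global balance equations. -/
def IsStat (a b c d f g pE pES pEP : ℝ) : Prop :=
  0 ≤ pE ∧ 0 ≤ pES ∧ 0 ≤ pEP ∧ pE + pES + pEP = 1 ∧
  (a + g) * pE = b * pES + f * pEP ∧
  (b + c) * pES = a * pE + d * pEP ∧
  (d + f) * pEP = c * pES + g * pE

/-- The unique stationary distribution of the cycle chain satisfies
`π_E = 1/(1 + a·T₁ + g·T₂)`, where `T₁, T₂` are the mean first passage times to
`E` from `ES` and `EP`; equivalently, the sequestered fraction
`R = π_ES + π_EP` equals `1 − 1/(1 + a·T₁ + g·T₂)`. -/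
theorem stmt_5
    (a b c d f g pE pES pEP : ℝ)
    (ha : 0 < a) (hb : 0 < b) (hc : 0 < c) (hd : 0 < d) (hf : 0 < f) (hg : 0 < g)
    (hstat : IsStat a b c d f g pE pES pEP) :
    let τES : ℝ := 1 / (b + c)
    let τEP : ℝ := 1 / (d + f)
    let p : ℝ := c / (b + c)
    let q : ℝ := d / (d + f)
    let T₁ : ℝ := (τES + p * τEP) / (1 - p * q)
    let T₂ : ℝ := (τEP + q * τES) / (1 - p * q)
    pE = 1 / (1 + a * T₁ + g * T₂) ∧
    pES + pEP = 1 - 1 / (1 + a * T₁ + g * T₂) := by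
  intro τES τEP p q T₁ T₂
  obtain ⟨-, -, -, hsum, h1, h2, h3⟩ := hstat
  have hbc : (0:ℝ) < b + c := by linarith
  have hdf : (0:ℝ) < d + f := by linarith
  have hD : (0:ℝ) < b*d + b*f + c*f := by positivity
  have hpq : 1 - p * q = (b*d + b*f + c*f) / ((b+c)*(d+f)) := by
    simp only [p, q]
    field_simp
    ring
  have hpq' : (0:ℝ) < 1 - p * q := by
    rw [hpq]; positivity
  have hT1 : T₁ = (c + d + f) / (b*d + b*f + c*f) := by
    simp only [T₁, τES, τEP, p, hpq]
    field_simp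
    ring
  have hT2 : T₂ = (b + c + d) / (b*d + b*f + c*f) := by
    simp only [T₂, τES, τEP, q, hpq]
    field_simp
  have hN : 1 + a * T₁ + g * T₂
      = (b*d + b*f + c*f + a*(c+d+f) + g*(b+c+d)) / (b*d + b*f + c*f) := by
    rw [hT1, hT2]
    field_simp
  have hNpos : (0:ℝ) < b*d + b*f + c*f + a*(c+d+f) + g*(b+c+d) := by positivity
  have key : pE * (b*d + b*f + c*f + a*(c+d+f) + g*(b+c+d)) = b*d + b*f + c*f := by
    linear_combination (b*d + b*f + c*f) * hsum - (d + f + c) * h2 - (d + b + c) * h3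
  have hE : pE = 1 / (1 + a * T₁ + g * T₂) := by
    rw [hN, one_div, inv_div, eq_div_iff hNpos.ne']
    exact key
  exact ⟨hE, by linarith⟩
end

section
/- (Region I behaviour.) Fix x ∈ ℝ and let y₁ < y₂ with y₂ ≤ x + Δμ + ΔGc (so that both points lie in the closure of Region I). Then R(x, y₂) < R(x, y₁); if moreover S·e^(Δμ) > P, then Ψ(x, y₂) > Ψ(x, y₁). That is, within Region I, increasing the product binding free energy ΔG_EP strictly decreases the sequestered fraction and strictly increases the flux. -/
open Real Filter

/-- Unique stationary distribution of the three-state cycle, via the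
Markov tree theorem. -/
lemma stat_solve (a b c d f g pE pES pEP : ℝ)
    (ha : 0 < a) (hb : 0 < b) (hc : 0 < c) (hd : 0 < d) (hf : 0 < f) (hg : 0 < g)
    (h : IsStat a b c d f g pE pES pEP) :
    pE = (b*d + b*f + c*f) /
      (b*d + b*f + c*f + (a*d + a*f + g*d) + (a*c + g*b + g*c)) ∧
    pES = (a*d + a*f + g*d) /
      (b*d + b*f + c*f + (a*d + a*f + g*d) + (a*c + g*b + g*c)) ∧
    pEP = (a*c + g*b + g*c) /
      (b*d + b*f + c*f + (a*d + a*f + g*d) + (a*c + g*b + g*c)) := by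
  obtain ⟨_, _, _, hsum, h1, h2, h3⟩ := h
  set w : ℝ := b*d + b*f + c*f with hw_def
  set u : ℝ := a*d + a*f + g*d with hu_def
  set v : ℝ := a*c + g*b + g*c with hv_def
  set Z : ℝ := w + u + v with hZ_def
  have hw : 0 < w := by positivity
  have hv : 0 < v := by positivity
  have hZ : 0 < Z := by positivity
  have hES' : w * pES = u * pE := by linear_combination (-(d+f))*h1 - f*h3
  have hEP' : w * pEP = v * pE := by linear_combination (-c)*h1 + b*h3
  have hE : pE * Z = w := by linear_combination w*hsum - hES' - hEP'
  have hpE : pE = w / Z := by rw [eq_div_iff hZ.ne']; exact hE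
  have hpES : pES = u / Z := by
    rw [eq_div_iff hZ.ne']
    have : w * (pES * Z) = w * u := by linear_combination Z*hES' + u*hE
    exact mul_left_cancel₀ hw.ne' this
  have hpEP : pEP = v / Z := by
    rw [eq_div_iff hZ.ne']
    have : w * (pEP * Z) = w * v := by linear_combination Z*hEP' + v*hE
    exact mul_left_cancel₀ hw.ne' this
  exact ⟨hpE, hpES, hpEP⟩

/-- Explicit formulas for the sequestered fraction and flux when the
rates `d, f` are proportional to `t`. -/
lemma stat_formulas (a b c D g k1 t pE pES pEP : ℝ)
    (ha : 0 < a) (hb : 0 < b) (hc : 0 < c) (hD : 0 < D) (hg : 0 < g)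
    (hk1 : 0 < k1) (ht : 0 < t)
    (h : IsStat a b c (D*t) (k1*t) g pE pES pEP) :
    pES + pEP = ((a*D + a*k1 + g*D)*t + (a*c + g*b + g*c)) /
      ((b*D + b*k1 + c*k1 + a*D + a*k1 + g*D)*t + (a*c + g*b + g*c)) ∧
    a*pE - b*pES = ((a*c*k1 - b*g*D)*t) /
      ((b*D + b*k1 + c*k1 + a*D + a*k1 + g*D)*t + (a*c + g*b + g*c)) := by
  obtain ⟨hpE, hpES, hpEP⟩ := stat_solve a b c (D*t) (k1*t) g pE pES pEP
    ha hb hc (by positivity) (by positivity) hg h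
  constructor
  · rw [hpES, hpEP, ← add_div]
    congr 1 <;> ring
  · rw [hpE, hpES, ← mul_div_assoc, ← mul_div_assoc, div_sub_div_same]
    congr 1 <;> ring

/-- Region I behaviour: for fixed `x`, increasing the product binding free
energy within (the closure of) Region I strictly decreases the sequestered
fraction and, when `S·e^Δμ > P`, strictly increases the flux. -/
theorem stmt_6
    (k0 k1 kcat S P dmu dGc : ℝ)
    (hk0 : 0 < k0) (hk1 : 0 < k1) (hkcat : 0 < kcat) (hS : 0 < S) (hP : 0 < P)
    (pE pES pEP R Psi : ℝ → ℝ → ℝ)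
    (hstat : ∀ x y : ℝ,
      IsStat (k0 * S) (k0 * exp x)
        (kcat * min 1 (exp (x - y + dmu + dGc)))
        (kcat * exp dGc * min 1 (exp (y - x - dmu - dGc)))
        (k1 * exp y) (k1 * P)
        (pE x y) (pES x y) (pEP x y))
    (hR : ∀ x y : ℝ, R x y = pES x y + pEP x y)
    (hPsi : ∀ x y : ℝ, Psi x y = k0 * S * pE x y - k0 * exp x * pES x y)
    (x y₁ y₂ : ℝ) (hy : y₁ < y₂) (hreg : y₂ ≤ x + dmu + dGc) :
    R x y₂ < R x y₁ ∧ (S * exp dmu > P → Psi x y₂ > Psi x y₁) := by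
  -- simplified rates in (the closure of) Region I
  have hrate : ∀ y : ℝ, y ≤ x + dmu + dGc →
      IsStat (k0*S) (k0*exp x) kcat ((kcat * exp (-(x+dmu))) * exp y)
        (k1 * exp y) (k1*P) (pE x y) (pES x y) (pEP x y) := by
    intro y hyle
    have h := hstat x y
    have hc' : kcat * min 1 (exp (x - y + dmu + dGc)) = kcat := by
      rw [min_eq_left (Real.one_le_exp (by linarith))]; ring
    have h01 : exp (y - x - dmu - dGc) ≤ 1 := by
      rw [show (1:ℝ) = exp 0 from (Real.exp_zero).symm]
      exact Real.exp_le_exp.2 (by linarith)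
    have hd' : kcat * exp dGc * min 1 (exp (y - x - dmu - dGc)) =
        (kcat * exp (-(x+dmu))) * exp y := by
      rw [min_eq_right h01, mul_assoc, ← Real.exp_add,
        show dGc + (y - x - dmu - dGc) = -(x+dmu) + y from by ring,
        Real.exp_add, ← mul_assoc]
    rwa [hc', hd'] at h
  have hy1le : y₁ ≤ x + dmu + dGc := le_of_lt (lt_of_lt_of_le hy hreg)
  have ht : exp y₁ < exp y₂ := Real.exp_lt_exp.2 hy
  have ht1 : (0:ℝ) < exp y₁ := Real.exp_pos _
  have ht2 : (0:ℝ) < exp y₂ := Real.exp_pos _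
  -- abbreviations
  set a : ℝ := k0*S with ha_def
  set b : ℝ := k0*exp x with hb_def
  set D : ℝ := kcat * exp (-(x+dmu)) with hD_def
  set g : ℝ := k1*P with hg_def
  have ha : 0 < a := by positivity
  have hb : 0 < b := by positivity
  have hD : 0 < D := by positivity
  have hg : 0 < g := by positivity
  obtain ⟨hR1, hPsi1⟩ := stat_formulas a b kcat D g k1 (exp y₁) _ _ _
    ha hb hkcat hD hg hk1 ht1 (hrate y₁ hy1le)
  obtain ⟨hR2, hPsi2⟩ := stat_formulas a b kcat D g k1 (exp y₂) _ _ _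
    ha hb hkcat hD hg hk1 ht2 (hrate y₂ hreg)
  set U : ℝ := a*D + a*k1 + g*D with hU_def
  set B : ℝ := a*kcat + g*b + g*kcat with hB_def
  have hU : 0 < U := by positivity
  have hB : 0 < B := by positivity
  have hW : 0 < b*D + b*k1 + kcat*k1 := by positivity
  have hZ1 : 0 < (b*D + b*k1 + kcat*k1 + a*D + a*k1 + g*D) * exp y₁ + B := by positivity
  have hZ2 : 0 < (b*D + b*k1 + kcat*k1 + a*D + a*k1 + g*D) * exp y₂ + B := by positivity
  constructor
  · -- sequestered fraction decreases
    rw [hR x y₁, hR x y₂, hR1, hR2, div_lt_div_iff₀ hZ2 hZ1]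
    have key : (U*exp y₁ + B) * ((b*D + b*k1 + kcat*k1 + a*D + a*k1 + g*D) * exp y₂ + B)
        - (U*exp y₂ + B) * ((b*D + b*k1 + kcat*k1 + a*D + a*k1 + g*D) * exp y₁ + B)
        = B * (b*D + b*k1 + kcat*k1) * (exp y₂ - exp y₁) := by ring
    nlinarith [mul_pos (mul_pos hB hW) (sub_pos.2 ht)]
  · -- flux increases
    intro hSP
    have hexp : exp x * exp (-(x+dmu)) = exp (-dmu) := by
      rw [← Real.exp_add]; congr 1; ring
    have hS' : P * exp (-dmu) < S := by
      have h2 : P * exp (-dmu) < (S * exp dmu) * exp (-dmu) :=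
        mul_lt_mul_of_pos_right hSP (Real.exp_pos _)
      have h3 : (S * exp dmu) * exp (-dmu) = S := by
        rw [mul_assoc, ← Real.exp_add]; simp
      linarith [h3 ▸ h2]
    have hbgD : b*g*D = k0*k1*kcat*(P * exp (-dmu)) := by
      rw [hb_def, hg_def, hD_def]
      linear_combination (k0*k1*P*kcat) * hexp
    have hK : 0 < a*kcat*k1 - b*g*D := by
      have hpos : 0 < k0*k1*kcat*(S - P * exp (-dmu)) := by
        have := sub_pos.2 hS'
        positivity
      have he1 : a*kcat*k1 = k0*k1*kcat*S := by rw [ha_def]; ring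
      have he2 : k0*k1*kcat*(S - P * exp (-dmu))
          = k0*k1*kcat*S - k0*k1*kcat*(P * exp (-dmu)) := by ring
      rw [hbgD, he1]; linarith
    rw [hPsi x y₁, hPsi x y₂]
    have e1 : k0 * S * pE x y₁ - k0 * exp x * pES x y₁ = a * pE x y₁ - b * pES x y₁ := by
      rw [ha_def, hb_def]
    have e2 : k0 * S * pE x y₂ - k0 * exp x * pES x y₂ = a * pE x y₂ - b * pES x y₂ := by
      rw [ha_def, hb_def]
    rw [e1, e2, hPsi1, hPsi2, gt_iff_lt, div_lt_div_iff₀ hZ1 hZ2]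
    have key : ((a*kcat*k1 - b*g*D)*exp y₂) * ((b*D + b*k1 + kcat*k1 + a*D + a*k1 + g*D) * exp y₁ + B)
        - ((a*kcat*k1 - b*g*D)*exp y₁) * ((b*D + b*k1 + kcat*k1 + a*D + a*k1 + g*D) * exp y₂ + B)
        = (a*kcat*k1 - b*g*D) * B * (exp y₂ - exp y₁) := by ring
    linarith [key, mul_pos (mul_pos hK hB) (sub_pos.2 ht)]
end

section
/- For every (x,y) ∈ ℝ² and every δ > 0, the sequestered fraction strictly decreases when both binding free energies are increased by δ: R(x + δ, y + δ) < R(x, y). -/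
open Real Filter

lemma seq_eq (a b c d f g pE pES pEP : ℝ) (h : IsStat a b c d f g pE pES pEP) :
    (pES + pEP) * ((b*d + b*f + c*f) + (a*d + a*f + d*g + b*g + c*g + c*a))
      = a*d + a*f + d*g + b*g + c*g + c*a := by
  obtain ⟨_, _, _, hsum, e1, e2, e3⟩ := h
  have h1 : (b*d + b*f + c*f) * pES = (a*(d+f) + d*g) * pE := by
    linear_combination (d+f)*e2 + d*e3
  have h2 : (b*d + b*f + c*f) * pEP = (c*a + (b+c)*g) * pE := by
    linear_combination c*e2 + (b+c)*e3
  linear_combination h1 + h2 + (a*d + a*f + d*g + b*g + c*g + c*a) * hsum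

/-- Increasing both binding free energies by the same `δ > 0` strictly
decreases the sequestered fraction. -/
theorem stmt_8
    (k0 k1 kcat S P dmu dGc : ℝ)
    (hk0 : 0 < k0) (hk1 : 0 < k1) (hkcat : 0 < kcat) (hS : 0 < S) (hP : 0 < P)
    (pE pES pEP R Psi : ℝ → ℝ → ℝ)
    (hstat : ∀ x y : ℝ,
      IsStat (k0 * S) (k0 * exp x)
        (kcat * min 1 (exp (x - y + dmu + dGc)))
        (kcat * exp dGc * min 1 (exp (y - x - dmu - dGc)))
        (k1 * exp y) (k1 * P)
        (pE x y) (pES x y) (pEP x y))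
    (hR : ∀ x y : ℝ, R x y = pES x y + pEP x y)
    (hPsi : ∀ x y : ℝ, Psi x y = k0 * S * pE x y - k0 * exp x * pES x y)
    : ∀ x y δ : ℝ, 0 < δ → R (x + δ) (y + δ) < R x y := by
  intro x y δ hδ
  set t : ℝ := Real.exp δ with htdef
  have ht : 1 < t := by
    have h := Real.add_one_le_exp δ
    rw [htdef]; linarith
  have ht0 : 0 < t := lt_trans one_pos ht
  -- rates at (x, y)
  set a : ℝ := k0 * S with hadef
  set b : ℝ := k0 * Real.exp x with hbdef
  set c : ℝ := kcat * min 1 (Real.exp (x - y + dmu + dGc)) with hcdef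
  set d : ℝ := kcat * Real.exp dGc * min 1 (Real.exp (y - x - dmu - dGc)) with hddef
  set f : ℝ := k1 * Real.exp y with hfdef
  set g : ℝ := k1 * P with hgdef
  have ha : 0 < a := mul_pos hk0 hS
  have hb : 0 < b := mul_pos hk0 (Real.exp_pos x)
  have hc : 0 < c := mul_pos hkcat (lt_min one_pos (Real.exp_pos _))
  have hd : 0 < d := mul_pos (mul_pos hkcat (Real.exp_pos _)) (lt_min one_pos (Real.exp_pos _))
  have hf : 0 < f := mul_pos hk1 (Real.exp_pos y)
  have hg : 0 < g := mul_pos hk1 hP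
  -- stationary equation at (x, y)
  have H1 := seq_eq _ _ _ _ _ _ _ _ _ (hstat x y)
  -- stationary equation at (x+δ, y+δ); rewrite the rates
  have H2 := hstat (x + δ) (y + δ)
  have hb' : k0 * Real.exp (x + δ) = b * t := by
    rw [Real.exp_add]; ring
  have hf' : k1 * Real.exp (y + δ) = f * t := by
    rw [Real.exp_add]; ring
  have hc' : kcat * min 1 (Real.exp (x + δ - (y + δ) + dmu + dGc)) = c := by
    have : x + δ - (y + δ) + dmu + dGc = x - y + dmu + dGc := by ring
    rw [this]
  have hd' : kcat * Real.exp dGc * min 1 (Real.exp (y + δ - (x + δ) - dmu - dGc)) = d := by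
    have : y + δ - (x + δ) - dmu - dGc = y - x - dmu - dGc := by ring
    rw [this]
  rw [hb', hf', hc', hd'] at H2
  have H2' := seq_eq _ _ _ _ _ _ _ _ _ H2
  -- abbreviations
  set N : ℝ := a*d + a*f + d*g + b*g + c*g + c*a with hNdef
  set D : ℝ := b*d + b*f + c*f with hDdef
  set N' : ℝ := a*d + a*(f*t) + d*g + (b*t)*g + c*g + c*a with hN'def
  set D' : ℝ := (b*t)*d + (b*t)*(f*t) + c*(f*t) with hD'def
  have hN : 0 < N := by positivity
  have hD : 0 < D := by positivity
  have hN' : 0 < N' := by positivity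
  have hD' : 0 < D' := by positivity
  have hT : 0 < D + N := by linarith
  have hT' : 0 < D' + N' := by linarith
  have hRxy : R x y = N / (D + N) := by
    rw [hR]
    rw [eq_div_iff hT.ne']
    linarith [H1]
  have hRxy' : R (x + δ) (y + δ) = N' / (D' + N') := by
    rw [hR]
    rw [eq_div_iff hT'.ne']
    linarith [H2']
  rw [hRxy, hRxy']
  rw [div_lt_div_iff₀ hT' hT]
  -- key polynomial inequality: N' * D < N * D'
  have hF : 0 < (a+g)*(c+d)*(b*d+c*f) + (a+g)*(c+d)*(b*f)*(t+1) + (a*f+b*g)*(b*f)*t := by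
    have h1 : 0 < (a+g)*(c+d)*(b*d+c*f) := by positivity
    have h2 : 0 < (a+g)*(c+d)*(b*f)*(t+1) := by positivity
    have h3 : 0 < (a*f+b*g)*(b*f)*t := by positivity
    linarith
  have hdiff : N * D' - N' * D
      = (t - 1) * ((a+g)*(c+d)*(b*d+c*f) + (a+g)*(c+d)*(b*f)*(t+1) + (a*f+b*g)*(b*f)*t) := by
    simp only [hNdef, hDdef, hN'def, hD'def]
    ring
  have hkey : N' * D < N * D' := by
    have := mul_pos (sub_pos.mpr ht) hF
    linarith
  have hfin : N' * (D + N) - N * (D' + N') = N' * D - N * D' := by ring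
  linarith
end

section
/- (Optimal binding free energies lie on the line.) Suppose S·e^(Δμ) > P and Ψ₀ > 0, and suppose the feasible set F = {(x,y) ∈ ℝ² : Ψ(x,y) ≥ Ψ₀} is nonempty. If (x*, y*) ∈ F minimizes R over F, then y* = x* + Δμ + ΔGc; that is, no point strictly inside Region I or Region II can minimize the sequestered fraction subject to the flux constraint. -/
open Real Filter

/-- Explicit solution of the stationary equations: the values of
`pES + pEP` and of the net flux `a*pE - b*pES` are given by the
Markov-chain tree-theorem formulas. -/
lemma stat_out (a b c d f g pE pES pEP : ℝ)
    (ha : 0 < a) (hb : 0 < b) (hc : 0 < c) (hd : 0 < d) (hf : 0 < f) (hg : 0 < g)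
    (h : IsStat a b c d f g pE pES pEP) :
    pES + pEP = ((a*d + a*f + g*d) + (a*c + g*b + g*c)) /
      ((b*d + b*f + c*f) + (a*d + a*f + g*d) + (a*c + g*b + g*c)) ∧
    a*pE - b*pES = (a*c*f - b*d*g) /
      ((b*d + b*f + c*f) + (a*d + a*f + g*d) + (a*c + g*b + g*c)) := by
  obtain ⟨-, -, -, hsum, e1, e2, e3⟩ := h
  have hwE : (0:ℝ) < b*d + b*f + c*f := by positivity
  have hW : (0:ℝ) < (b*d + b*f + c*f) + (a*d + a*f + g*d) + (a*c + g*b + g*c) := by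
    positivity
  have h1 : pES * (b*d + b*f + c*f) = pE * (a*d + a*f + g*d) := by
    linear_combination f * e2 - d * e1
  have h2 : pEP * (b*d + b*f + c*f) = pE * (a*c + g*b + g*c) := by
    linear_combination b * e3 - c * e1
  have h3 : pE * ((b*d + b*f + c*f) + (a*d + a*f + g*d) + (a*c + g*b + g*c))
      = (b*d + b*f + c*f) := by
    linear_combination (b*d + b*f + c*f) * hsum - h1 - h2
  have hpE : pE = (b*d + b*f + c*f) /
      ((b*d + b*f + c*f) + (a*d + a*f + g*d) + (a*c + g*b + g*c)) :=
    (eq_div_iff hW.ne').2 h3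
  have h4 : pES * ((b*d + b*f + c*f) + (a*d + a*f + g*d) + (a*c + g*b + g*c))
      * (b*d + b*f + c*f) = (a*d + a*f + g*d) * (b*d + b*f + c*f) := by
    linear_combination ((b*d + b*f + c*f) + (a*d + a*f + g*d) + (a*c + g*b + g*c)) * h1
      + (a*d + a*f + g*d) * h3
  have h5 : pES * ((b*d + b*f + c*f) + (a*d + a*f + g*d) + (a*c + g*b + g*c))
      = (a*d + a*f + g*d) := mul_right_cancel₀ hwE.ne' h4
  have hpES : pES = (a*d + a*f + g*d) /
      ((b*d + b*f + c*f) + (a*d + a*f + g*d) + (a*c + g*b + g*c)) :=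
    (eq_div_iff hW.ne').2 h5
  have h6 : pEP * ((b*d + b*f + c*f) + (a*d + a*f + g*d) + (a*c + g*b + g*c))
      * (b*d + b*f + c*f) = (a*c + g*b + g*c) * (b*d + b*f + c*f) := by
    linear_combination ((b*d + b*f + c*f) + (a*d + a*f + g*d) + (a*c + g*b + g*c)) * h2
      + (a*c + g*b + g*c) * h3
  have h7 : pEP * ((b*d + b*f + c*f) + (a*d + a*f + g*d) + (a*c + g*b + g*c))
      = (a*c + g*b + g*c) := mul_right_cancel₀ hwE.ne' h6
  have hpEP : pEP = (a*c + g*b + g*c) /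
      ((b*d + b*f + c*f) + (a*d + a*f + g*d) + (a*c + g*b + g*c)) :=
    (eq_div_iff hW.ne').2 h7
  constructor
  · rw [hpES, hpEP, ← add_div]
  · rw [hpE, hpES, ← mul_div_assoc, ← mul_div_assoc, div_sub_div_same]
    congr 1
    ring

/-- Region I structure: when `d = δ*v` and `f = β*v` depend linearly on `v`
and the other rates are constant, `R` and `Ψ` take the fractional forms
`(B v + D)/((A+B) v + D)` and `C v/((A+B) v + D)`. -/
lemma genI (a b γ δ β g v pE pES pEP : ℝ)
    (ha : 0 < a) (hb : 0 < b) (hγ : 0 < γ) (hδ : 0 < δ) (hβ : 0 < β)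
    (hg : 0 < g) (hv : 0 < v)
    (h : IsStat a b γ (δ*v) (β*v) g pE pES pEP) :
    pES + pEP = ((a*δ + a*β + g*δ)*v + (a*γ + g*b + g*γ)) /
      (((b*δ + b*β + γ*β) + (a*δ + a*β + g*δ))*v + (a*γ + g*b + g*γ)) ∧
    a*pE - b*pES = ((a*γ*β - b*δ*g)*v) /
      (((b*δ + b*β + γ*β) + (a*δ + a*β + g*δ))*v + (a*γ + g*b + g*γ)) := by
  obtain ⟨h1, h2⟩ := stat_out a b γ (δ*v) (β*v) g pE pES pEP ha hb hγ
    (by positivity) (by positivity) hg h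
  constructor
  · rw [h1, div_eq_div_iff (by positivity) (by positivity)]
    ring
  · rw [h2, div_eq_div_iff (by positivity) (by positivity)]
    ring

/-- Region II structure: when `b = b₀*u` and `c = γ₀*u` depend linearly on `u`
and the other rates are constant, `R` and `Ψ` take the same fractional forms. -/
lemma genII (a b₀ γ₀ d f g u pE pES pEP : ℝ)
    (ha : 0 < a) (hb : 0 < b₀) (hγ : 0 < γ₀) (hd : 0 < d) (hf : 0 < f)
    (hg : 0 < g) (hu : 0 < u)
    (h : IsStat a (b₀*u) (γ₀*u) d f g pE pES pEP) :
    pES + pEP = ((a*γ₀ + g*b₀ + g*γ₀)*u + (a*d + a*f + g*d)) /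
      (((b₀*d + b₀*f + γ₀*f) + (a*γ₀ + g*b₀ + g*γ₀))*u + (a*d + a*f + g*d)) ∧
    a*pE - (b₀*u)*pES = ((a*γ₀*f - b₀*d*g)*u) /
      (((b₀*d + b₀*f + γ₀*f) + (a*γ₀ + g*b₀ + g*γ₀))*u + (a*d + a*f + g*d)) := by
  obtain ⟨h1, h2⟩ := stat_out a (b₀*u) (γ₀*u) d f g pE pES pEP ha
    (by positivity) (by positivity) hd hf hg h
  constructor
  · rw [h1, div_eq_div_iff (by positivity) (by positivity)]
    ring
  · rw [h2, div_eq_div_iff (by positivity) (by positivity)]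
    ring

/-- The fraction `(B v + D)/((A+B) v + D)` is strictly decreasing in `v` and
`C v/((A+B) v + D)` is strictly increasing in `v`, for positive parameters. -/
lemma frac_lt (A B C D v₁ v₂ : ℝ)
    (hA : 0 < A) (hB : 0 < B) (hC : 0 < C) (hD : 0 < D)
    (hv₁ : 0 < v₁) (h12 : v₁ < v₂) :
    (B*v₂ + D)/((A+B)*v₂ + D) < (B*v₁ + D)/((A+B)*v₁ + D) ∧
    (C*v₁)/((A+B)*v₁ + D) < (C*v₂)/((A+B)*v₂ + D) := by
  have hv₂ : 0 < v₂ := lt_trans hv₁ h12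
  have hd1 : 0 < (A+B)*v₁ + D := by positivity
  have hd2 : 0 < (A+B)*v₂ + D := by positivity
  constructor
  · rw [div_lt_div_iff₀ hd2 hd1]
    nlinarith [mul_pos (mul_pos hA hD) (sub_pos.2 h12)]
  · rw [div_lt_div_iff₀ hd1 hd2]
    nlinarith [mul_pos (mul_pos hC hD) (sub_pos.2 h12)]

/-- Optimal binding free energies lie on the line
`ΔG_EP = ΔG_ES + Δμ + ΔGc`: any minimizer of the sequestered fraction over the
nonempty feasible set `{Ψ ≥ Ψ₀}` satisfies `y* = x* + Δμ + ΔGc`. -/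
theorem stmt_9
    (k0 k1 kcat S P dmu dGc : ℝ)
    (hk0 : 0 < k0) (hk1 : 0 < k1) (hkcat : 0 < kcat) (hS : 0 < S) (hP : 0 < P)
    (pE pES pEP R Psi : ℝ → ℝ → ℝ)
    (hstat : ∀ x y : ℝ,
      IsStat (k0 * S) (k0 * exp x)
        (kcat * min 1 (exp (x - y + dmu + dGc)))
        (kcat * exp dGc * min 1 (exp (y - x - dmu - dGc)))
        (k1 * exp y) (k1 * P)
        (pE x y) (pES x y) (pEP x y))
    (hR : ∀ x y : ℝ, R x y = pES x y + pEP x y)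
    (hPsi : ∀ x y : ℝ, Psi x y = k0 * S * pE x y - k0 * exp x * pES x y)
    (hdrive : S * exp dmu > P)
    (Psi0 : ℝ) (hPsi0 : 0 < Psi0)
    (hne : ∃ q : ℝ × ℝ, Psi0 ≤ Psi q.1 q.2)
    (xs ys : ℝ)
    (hfeas : Psi0 ≤ Psi xs ys)
    (hmin : ∀ x y : ℝ, Psi0 ≤ Psi x y → R xs ys ≤ R x y) :
    ys = xs + dmu + dGc := by
  by_contra hne'
  rcases lt_or_gt_of_ne hne' with hI | hII
  · -- Region I : ys < xs + dmu + dGc.  Increase y toward the line.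
    set y2 : ℝ := (ys + (xs + dmu + dGc)) / 2 with hy2def
    have hy2a : ys < y2 := by rw [hy2def]; linarith
    have hy2b : y2 < xs + dmu + dGc := by rw [hy2def]; linarith
    -- key computation at any y < xs + dmu + dGc
    have key : ∀ y : ℝ, y < xs + dmu + dGc →
        R xs y = ((k0*S*(kcat * exp (-xs - dmu)) + k0*S*k1 + k1*P*(kcat * exp (-xs - dmu)))*exp y
            + (k0*S*kcat + k1*P*(k0 * exp xs) + k1*P*kcat)) /
          (((k0 * exp xs*(kcat * exp (-xs - dmu)) + k0 * exp xs*k1 + kcat*k1)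
            + (k0*S*(kcat * exp (-xs - dmu)) + k0*S*k1 + k1*P*(kcat * exp (-xs - dmu))))*exp y
            + (k0*S*kcat + k1*P*(k0 * exp xs) + k1*P*kcat)) ∧
        Psi xs y = ((k0*S*kcat*k1 - k0 * exp xs*(kcat * exp (-xs - dmu))*(k1*P))*exp y) /
          (((k0 * exp xs*(kcat * exp (-xs - dmu)) + k0 * exp xs*k1 + kcat*k1)
            + (k0*S*(kcat * exp (-xs - dmu)) + k0*S*k1 + k1*P*(kcat * exp (-xs - dmu))))*exp y
            + (k0*S*kcat + k1*P*(k0 * exp xs) + k1*P*kcat)) := by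
      intro y hy
      have h' := hstat xs y
      rw [show kcat * min 1 (exp (xs - y + dmu + dGc)) = kcat by
            rw [min_eq_left (Real.one_le_exp (by linarith)), mul_one],
          show kcat * exp dGc * min 1 (exp (y - xs - dmu - dGc))
              = kcat * exp (-xs - dmu) * exp y by
            rw [min_eq_right (Real.exp_le_one_iff.2 (by linarith)),
              mul_assoc, ← Real.exp_add, mul_assoc, ← Real.exp_add,
              show dGc + (y - xs - dmu - dGc) = -xs - dmu + y by ring]] at h'
      obtain ⟨e1, e2⟩ := genI (k0*S) (k0 * exp xs) kcat (kcat * exp (-xs - dmu)) k1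
        (k1*P) (exp y) (pE xs y) (pES xs y) (pEP xs y)
        (by positivity) (by positivity) hkcat (by positivity) hk1 (by positivity)
        (exp_pos y) h'
      exact ⟨by rw [hR xs y]; exact e1, by rw [hPsi xs y]; exact e2⟩
    obtain ⟨e1, e2⟩ := key ys hI
    obtain ⟨e3, e4⟩ := key y2 hy2b
    -- positivity of the coefficients
    have hCq : 0 < k0*S*kcat*k1 - k0 * exp xs*(kcat * exp (-xs - dmu))*(k1*P) := by
      have hx1 : exp xs * exp (-xs - dmu) = exp (-dmu) := by
        rw [← Real.exp_add, show xs + (-xs - dmu) = -dmu by ring]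
      have key1 : P * exp (-dmu) < S := by
        have h1 : P * exp (-dmu) < (S * exp dmu) * exp (-dmu) :=
          mul_lt_mul_of_pos_right hdrive (exp_pos _)
        have h2 : (S * exp dmu) * exp (-dmu) = S := by
          rw [mul_assoc, ← Real.exp_add, show dmu + -dmu = 0 by ring, Real.exp_zero,
            mul_one]
        linarith
      have hrw : k0*S*kcat*k1 - k0 * exp xs*(kcat * exp (-xs - dmu))*(k1*P)
          = k0*kcat*k1*(S - P * exp (-dmu)) := by
        linear_combination (-(k0*kcat*k1*P)) * hx1
      rw [hrw]
      exact mul_pos (by positivity) (by linarith)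
    obtain ⟨f1, f2⟩ := frac_lt
      (k0 * exp xs*(kcat * exp (-xs - dmu)) + k0 * exp xs*k1 + kcat*k1)
      (k0*S*(kcat * exp (-xs - dmu)) + k0*S*k1 + k1*P*(kcat * exp (-xs - dmu)))
      (k0*S*kcat*k1 - k0 * exp xs*(kcat * exp (-xs - dmu))*(k1*P))
      (k0*S*kcat + k1*P*(k0 * exp xs) + k1*P*kcat)
      (exp ys) (exp y2)
      (by positivity) (by positivity) hCq (by positivity)
      (exp_pos ys) (Real.exp_lt_exp.2 hy2a)
    have hfeas2 : Psi0 ≤ Psi xs y2 := by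
      rw [e4]; rw [e2] at hfeas; linarith
    have := hmin xs y2 hfeas2
    rw [e1, e3] at this
    linarith
  · -- Region II : ys > xs + dmu + dGc.  Increase x toward the line.
    set x2 : ℝ := (xs + (ys - dmu - dGc)) / 2 with hx2def
    have hx2a : xs < x2 := by rw [hx2def]; linarith
    have hx2b : x2 < ys - dmu - dGc := by rw [hx2def]; linarith
    have key : ∀ x : ℝ, x < ys - dmu - dGc →
        R x ys = ((k0*S*(kcat * exp (dmu + dGc - ys)) + k1*P*k0 + k1*P*(kcat * exp (dmu + dGc - ys)))*exp x
            + (k0*S*(kcat * exp dGc) + k0*S*(k1 * exp ys) + k1*P*(kcat * exp dGc))) /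
          (((k0*(kcat * exp dGc) + k0*(k1 * exp ys) + (kcat * exp (dmu + dGc - ys))*(k1 * exp ys))
            + (k0*S*(kcat * exp (dmu + dGc - ys)) + k1*P*k0 + k1*P*(kcat * exp (dmu + dGc - ys))))*exp x
            + (k0*S*(kcat * exp dGc) + k0*S*(k1 * exp ys) + k1*P*(kcat * exp dGc))) ∧
        Psi x ys = ((k0*S*(kcat * exp (dmu + dGc - ys))*(k1 * exp ys) - k0*(kcat * exp dGc)*(k1*P))*exp x) /
          (((k0*(kcat * exp dGc) + k0*(k1 * exp ys) + (kcat * exp (dmu + dGc - ys))*(k1 * exp ys))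
            + (k0*S*(kcat * exp (dmu + dGc - ys)) + k1*P*k0 + k1*P*(kcat * exp (dmu + dGc - ys))))*exp x
            + (k0*S*(kcat * exp dGc) + k0*S*(k1 * exp ys) + k1*P*(kcat * exp dGc))) := by
      intro x hx
      have h' := hstat x ys
      rw [show kcat * min 1 (exp (x - ys + dmu + dGc)) = kcat * exp (dmu + dGc - ys) * exp x by
            rw [min_eq_right (Real.exp_le_one_iff.2 (by linarith)),
              mul_assoc, ← Real.exp_add,
              show dmu + dGc - ys + x = x - ys + dmu + dGc by ring],
          show kcat * exp dGc * min 1 (exp (ys - x - dmu - dGc)) = kcat * exp dGc by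
            rw [min_eq_left (Real.one_le_exp (by linarith)), mul_one]] at h'
      obtain ⟨e1, e2⟩ := genII (k0*S) k0 (kcat * exp (dmu + dGc - ys)) (kcat * exp dGc)
        (k1 * exp ys) (k1*P) (exp x) (pE x ys) (pES x ys) (pEP x ys)
        (by positivity) hk0 (by positivity) (by positivity) (by positivity)
        (by positivity) (exp_pos x) h'
      refine ⟨by rw [hR x ys]; exact e1, ?_⟩
      rw [hPsi x ys]
      have : k0 * exp x = k0 * exp x := rfl
      calc k0 * S * pE x ys - k0 * exp x * pES x ys
          = k0*S * pE x ys - (k0 * exp x) * pES x ys := by ring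
        _ = _ := e2
    obtain ⟨e1, e2⟩ := key xs (by linarith)
    obtain ⟨e3, e4⟩ := key x2 hx2b
    have hCq : 0 < k0*S*(kcat * exp (dmu + dGc - ys))*(k1 * exp ys) - k0*(kcat * exp dGc)*(k1*P) := by
      have hx1 : exp (dmu + dGc - ys) * exp ys = exp dmu * exp dGc := by
        rw [← Real.exp_add, ← Real.exp_add, show dmu + dGc - ys + ys = dmu + dGc by ring]
      have hrw : k0*S*(kcat * exp (dmu + dGc - ys))*(k1 * exp ys) - k0*(kcat * exp dGc)*(k1*P)
          = k0*kcat*k1*exp dGc*(S * exp dmu - P) := by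
        linear_combination (k0*S*kcat*k1) * hx1
      rw [hrw]
      exact mul_pos (by positivity) (sub_pos.2 hdrive)
    obtain ⟨f1, f2⟩ := frac_lt
      (k0*(kcat * exp dGc) + k0*(k1 * exp ys) + (kcat * exp (dmu + dGc - ys))*(k1 * exp ys))
      (k0*S*(kcat * exp (dmu + dGc - ys)) + k1*P*k0 + k1*P*(kcat * exp (dmu + dGc - ys)))
      (k0*S*(kcat * exp (dmu + dGc - ys))*(k1 * exp ys) - k0*(kcat * exp dGc)*(k1*P))
      (k0*S*(kcat * exp dGc) + k0*S*(k1 * exp ys) + k1*P*(kcat * exp dGc))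
      (exp xs) (exp x2)
      (by positivity) (by positivity) hCq (by positivity)
      (exp_pos xs) (Real.exp_lt_exp.2 hx2a)
    have hfeas2 : Psi0 ≤ Psi x2 ys := by
      rw [e4]; rw [e2] at hfeas; linarith
    have := hmin x2 ys hfeas2
    rw [e1, e3] at this
    linarith
end

section
/- For every fixed offset w ∈ ℝ, along the line y = x + w one has: lim_{x→∞} π_E(x, x + w) = 1 (equivalently lim_{x→∞} R(x, x + w) = 0), lim_{x→∞} Ψ(x, x + w) = 0, and there exist constants C > 0 and x₀ ∈ ℝ such that |Ψ(x, x + w)| ≤ C·e^(−x) for all x ≥ x₀; i.e., the flux decays exponentially as both binding free energies diverge at fixed offset. -/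
open Real Filter

/-- Along any line `y = x + w`, as `x → ∞` the enzyme becomes free
(`π_E → 1`, `R → 0`), the flux tends to zero, and the flux decays at least
exponentially: `|Ψ(x, x+w)| ≤ C·e^(−x)` eventually. -/
theorem stmt_11
    (k0 k1 kcat S P dmu dGc : ℝ)
    (hk0 : 0 < k0) (hk1 : 0 < k1) (hkcat : 0 < kcat) (hS : 0 < S) (hP : 0 < P)
    (pE pES pEP R Psi : ℝ → ℝ → ℝ)
    (hstat : ∀ x y : ℝ,
      IsStat (k0 * S) (k0 * exp x)
        (kcat * min 1 (exp (x - y + dmu + dGc)))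
        (kcat * exp dGc * min 1 (exp (y - x - dmu - dGc)))
        (k1 * exp y) (k1 * P)
        (pE x y) (pES x y) (pEP x y))
    (hR : ∀ x y : ℝ, R x y = pES x y + pEP x y)
    (hPsi : ∀ x y : ℝ, Psi x y = k0 * S * pE x y - k0 * exp x * pES x y)
    (w : ℝ) :
    Tendsto (fun x : ℝ => pE x (x + w)) atTop (nhds 1) ∧
    Tendsto (fun x : ℝ => R x (x + w)) atTop (nhds 0) ∧
    Tendsto (fun x : ℝ => Psi x (x + w)) atTop (nhds 0) ∧
    ∃ C : ℝ, 0 < C ∧ ∃ x₀ : ℝ, ∀ x : ℝ, x₀ ≤ x → |Psi x (x + w)| ≤ C * exp (-x) := by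
  set K1 : ℝ := (k0 * S + kcat * exp dGc) / k0 with hK1
  set K2 : ℝ := (kcat + k1 * P) / (k1 * exp w) with hK2
  have hK1pos : 0 < K1 := by positivity
  have hK2pos : 0 < K2 := by positivity
  have key : ∀ x : ℝ,
      0 ≤ pES x (x + w) ∧ pES x (x + w) ≤ K1 * exp (-x) ∧
      0 ≤ pEP x (x + w) ∧ pEP x (x + w) ≤ K2 * exp (-x) ∧
      |Psi x (x + w)| ≤ (kcat * K1 + kcat * exp dGc * K2) * exp (-x) := by
    intro x
    obtain ⟨h1, h2, h3, hsum, hE, hES, hEP⟩ := hstat x (x + w)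
    set cr : ℝ := kcat * min 1 (exp (x - (x + w) + dmu + dGc)) with hcr
    set dr : ℝ := kcat * exp dGc * min 1 (exp ((x + w) - x - dmu - dGc)) with hdr
    have hcr0 : 0 ≤ cr := by rw [hcr]; positivity
    have hdr0 : 0 ≤ dr := by rw [hdr]; positivity
    have hcrle : cr ≤ kcat := by
      rw [hcr]
      exact mul_le_of_le_one_right hkcat.le (min_le_left _ _)
    have hdrle : dr ≤ kcat * exp dGc := by
      rw [hdr]
      exact mul_le_of_le_one_right (by positivity) (min_le_left _ _)
    clear_value cr dr
    clear hcr hdr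
    have hpE1 : pE x (x + w) ≤ 1 := by linarith
    have hpES1 : pES x (x + w) ≤ 1 := by linarith
    have hpEP1 : pEP x (x + w) ≤ 1 := by linarith
    have hex : (0:ℝ) < exp x := exp_pos x
    have haE : k0 * S * pE x (x + w) ≤ k0 * S :=
      mul_le_of_le_one_right (by positivity) hpE1
    have hdEP : dr * pEP x (x + w) ≤ kcat * exp dGc := by
      calc dr * pEP x (x + w) ≤ dr * 1 := by
            exact mul_le_mul_of_nonneg_left hpEP1 hdr0
        _ = dr := mul_one _
        _ ≤ kcat * exp dGc := hdrle
    have hcES : cr * pES x (x + w) ≤ kcat := by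
      calc cr * pES x (x + w) ≤ cr * 1 := mul_le_mul_of_nonneg_left hpES1 hcr0
        _ = cr := mul_one _
        _ ≤ kcat := hcrle
    have hgE : k1 * P * pE x (x + w) ≤ k1 * P :=
      mul_le_of_le_one_right (by positivity) hpE1
    have hcES0 : 0 ≤ cr * pES x (x + w) := mul_nonneg hcr0 h2
    have hdEP0 : 0 ≤ dr * pEP x (x + w) := mul_nonneg hdr0 h3
    have hbES : k0 * exp x * pES x (x + w) ≤ k0 * S + kcat * exp dGc := by linarith
    have hfEP : k1 * exp (x + w) * pEP x (x + w) ≤ kcat + k1 * P := by linarith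
    have hexx : exp (-x) * exp x = 1 := by rw [← Real.exp_add]; simp
    have hxw : exp (x + w) = exp x * exp w := Real.exp_add x w
    have hES2 : pES x (x + w) ≤ K1 * exp (-x) := by
      rw [hK1, div_mul_eq_mul_div, le_div_iff₀ hk0]
      have h' := mul_le_mul_of_nonneg_left hbES (exp_pos (-x)).le
      have he : exp (-x) * (k0 * exp x * pES x (x + w)) = k0 * pES x (x + w) := by
        rw [show exp (-x) * (k0 * exp x * pES x (x + w))
            = k0 * (exp (-x) * exp x) * pES x (x + w) from by ring, hexx]
        ring
      rw [he] at h'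
      linarith
    have hEP2 : pEP x (x + w) ≤ K2 * exp (-x) := by
      rw [hK2, div_mul_eq_mul_div, le_div_iff₀ (by positivity : (0:ℝ) < k1 * exp w)]
      have h' := mul_le_mul_of_nonneg_left hfEP (exp_pos (-x)).le
      have he : exp (-x) * (k1 * exp (x + w) * pEP x (x + w))
          = k1 * exp w * pEP x (x + w) := by
        rw [hxw, show exp (-x) * (k1 * (exp x * exp w) * pEP x (x + w))
            = k1 * exp w * (exp (-x) * exp x) * pEP x (x + w) from by ring, hexx]
        ring
      rw [he] at h'
      linarith
    refine ⟨h2, hES2, h3, hEP2, ?_⟩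
    have hPsiEq : Psi x (x + w) = cr * pES x (x + w) - dr * pEP x (x + w) := by
      rw [hPsi]; linarith
    rw [hPsiEq]
    have habs := abs_sub (cr * pES x (x + w)) (dr * pEP x (x + w))
    rw [abs_of_nonneg hcES0, abs_of_nonneg hdEP0] at habs
    have hb1 : cr * pES x (x + w) ≤ kcat * (K1 * exp (-x)) := by
      have := mul_le_mul hcrle hES2 h2 hkcat.le
      linarith
    have hb2 : dr * pEP x (x + w) ≤ kcat * exp dGc * (K2 * exp (-x)) := by
      have := mul_le_mul hdrle hEP2 h3 (by positivity : (0:ℝ) ≤ kcat * exp dGc)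
      linarith
    calc |cr * pES x (x + w) - dr * pEP x (x + w)|
        ≤ cr * pES x (x + w) + dr * pEP x (x + w) := habs
      _ ≤ kcat * (K1 * exp (-x)) + kcat * exp dGc * (K2 * exp (-x)) := by linarith
      _ = (kcat * K1 + kcat * exp dGc * K2) * exp (-x) := by ring
  have hexp0 : Tendsto (fun x : ℝ => exp (-x)) atTop (nhds 0) :=
    Real.tendsto_exp_neg_atTop_nhds_zero
  have hES0 : Tendsto (fun x : ℝ => pES x (x + w)) atTop (nhds 0) := by
    apply squeeze_zero (fun x => (key x).1) (fun x => (key x).2.1)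
    simpa using hexp0.const_mul K1
  have hEP0 : Tendsto (fun x : ℝ => pEP x (x + w)) atTop (nhds 0) := by
    apply squeeze_zero (fun x => (key x).2.2.1) (fun x => (key x).2.2.2.1)
    simpa using hexp0.const_mul K2
  have hR0 : Tendsto (fun x : ℝ => R x (x + w)) atTop (nhds 0) := by
    have h : Tendsto (fun x : ℝ => pES x (x + w) + pEP x (x + w)) atTop (nhds 0) := by
      simpa using hES0.add hEP0
    simpa [hR] using h
  have hpEt : Tendsto (fun x : ℝ => pE x (x + w)) atTop (nhds 1) := by
    have heq : ∀ x : ℝ, pE x (x + w) = 1 - (pES x (x + w) + pEP x (x + w)) := by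
      intro x
      obtain ⟨_, _, _, hsum, _, _, _⟩ := hstat x (x + w)
      linarith
    have h : Tendsto (fun x : ℝ => 1 - (pES x (x + w) + pEP x (x + w))) atTop (nhds 1) := by
      have := (hES0.add hEP0).const_sub 1
      simpa using this
    simpa [heq] using h
  have hPsi0 : Tendsto (fun x : ℝ => Psi x (x + w)) atTop (nhds 0) := by
    exact squeeze_zero_norm
      (a := fun x => (kcat * K1 + kcat * exp dGc * K2) * exp (-x))
      (fun x => by simpa [Real.norm_eq_abs] using (key x).2.2.2.2)
      (by simpa using hexp0.const_mul (kcat * K1 + kcat * exp dGc * K2))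
  exact ⟨hpEt, hR0, hPsi0, kcat * K1 + kcat * exp dGc * K2, by positivity, 0,
    fun x _ => (key x).2.2.2.2⟩
end

section
/- (Closed-form flux in Region I.) For every (x,y) with y ≤ x + Δμ + ΔGc, the flux satisfies Ψ(x,y) = (1 − R(x,y))·k0·k1·kcat·(S·e^(Δμ) − P)/(k0·kcat + k0·k1·e^(x+Δμ) + k1·kcat·e^(Δμ)). In particular, in Region I the ratio Ψ(x,y)/(1 − R(x,y)) does not depend on y. -/
open Real Filter

/-- Closed-form flux in Region I: for `y ≤ x + Δμ + ΔGc`,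
`Ψ = (1 − R)·k0·k1·kcat·(S·e^Δμ − P)/(k0·kcat + k0·k1·e^(x+Δμ) + k1·kcat·e^Δμ)`;
in particular `Ψ/(1 − R)` does not depend on `y` in Region I. -/
theorem stmt_12
    (k0 k1 kcat S P dmu dGc : ℝ)
    (hk0 : 0 < k0) (hk1 : 0 < k1) (hkcat : 0 < kcat) (hS : 0 < S) (hP : 0 < P)
    (pE pES pEP R Psi : ℝ → ℝ → ℝ)
    (hstat : ∀ x y : ℝ,
      IsStat (k0 * S) (k0 * exp x)
        (kcat * min 1 (exp (x - y + dmu + dGc)))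
        (kcat * exp dGc * min 1 (exp (y - x - dmu - dGc)))
        (k1 * exp y) (k1 * P)
        (pE x y) (pES x y) (pEP x y))
    (hR : ∀ x y : ℝ, R x y = pES x y + pEP x y)
    (hPsi : ∀ x y : ℝ, Psi x y = k0 * S * pE x y - k0 * exp x * pES x y)
    : (∀ x y : ℝ, y ≤ x + dmu + dGc →
        Psi x y = (1 - R x y) *
          (k0 * k1 * kcat * (S * exp dmu - P) /
            (k0 * kcat + k0 * k1 * exp (x + dmu) + k1 * kcat * exp dmu))) ∧
      (∀ x y₁ y₂ : ℝ, y₁ ≤ x + dmu + dGc → y₂ ≤ x + dmu + dGc →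
        Psi x y₁ / (1 - R x y₁) = Psi x y₂ / (1 - R x y₂)) := by
  have hmain : ∀ x y : ℝ, y ≤ x + dmu + dGc →
      Psi x y = (1 - R x y) *
        (k0 * k1 * kcat * (S * exp dmu - P) /
          (k0 * kcat + k0 * k1 * exp (x + dmu) + k1 * kcat * exp dmu)) ∧
      0 < 1 - R x y := by
    intro x y hy
    obtain ⟨hpE0, hpES0, hpEP0, hsum, e1, e2, e3⟩ := hstat x y
    have hc : min 1 (exp (x - y + dmu + dGc)) = 1 :=
      min_eq_left (Real.one_le_exp (by linarith))
    have hd : min 1 (exp (y - x - dmu - dGc)) = exp (y - x - dmu - dGc) :=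
      min_eq_right (Real.exp_le_one_iff.mpr (by linarith))
    rw [hc, hd] at e2 e3
    have hdd : kcat * exp dGc * exp (y - x - dmu - dGc) = kcat * exp (y - x - dmu) := by
      rw [mul_assoc, ← exp_add]; ring_nf
    rw [hdd] at e2 e3
    set u : ℝ := exp (y - x - dmu) with hu
    have hupos : 0 < u := exp_pos _
    have hEpos : 0 < exp x := exp_pos _
    have hMpos : 0 < exp dmu := exp_pos _
    have hyy : exp y = u * exp x * exp dmu := by
      rw [hu, ← exp_add, ← exp_add]; ring_nf
    have hxm : exp (x + dmu) = exp x * exp dmu := exp_add x dmu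
    rw [hyy] at e1 e3
    -- pE > 0
    have hpEpos : 0 < pE x y := by
      rcases lt_or_eq_of_le hpE0 with h | h
      · exact h
      · exfalso
        have hb : 0 < k0 * exp x := by positivity
        have hf : 0 < k1 * (u * exp x * exp dmu) := by positivity
        have he1 : k0 * exp x * pES x y + k1 * (u * exp x * exp dmu) * pEP x y = 0 := by
          rw [← h] at e1; linarith
        have h2 : pES x y = 0 := by
          have : k0 * exp x * pES x y = 0 :=
            le_antisymm (by nlinarith [mul_nonneg hf.le hpEP0]) (mul_nonneg hb.le hpES0)
          exact (mul_eq_zero.mp this).resolve_left hb.ne' 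
        have h3 : pEP x y = 0 := by
          have : k1 * (u * exp x * exp dmu) * pEP x y = 0 :=
            le_antisymm (by nlinarith [mul_nonneg hb.le hpES0]) (mul_nonneg hf.le hpEP0)
          exact (mul_eq_zero.mp this).resolve_left hf.ne'
        rw [← h, h2, h3] at hsum
        norm_num at hsum
    have h1R : 1 - R x y = pE x y := by rw [hR]; linarith
    -- key linear relation
    have key : (k0 * exp x * (kcat * u) + k0 * exp x * (k1 * (u * exp x * exp dmu))
        + kcat * (k1 * (u * exp x * exp dmu))) * pES x y
        = (k0 * S * (kcat * u) + k0 * S * (k1 * (u * exp x * exp dmu))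
          + (kcat * u) * (k1 * P)) * pE x y := by
      linear_combination (kcat * u + k1 * (u * exp x * exp dmu)) * e2 + (kcat * u) * e3
    refine ⟨?_, by rw [h1R]; exact hpEpos⟩
    have hD : 0 < k0 * kcat + k0 * k1 * exp (x + dmu) + k1 * kcat * exp dmu := by
      rw [hxm]; positivity
    rw [h1R, hxm, ← mul_div_assoc, eq_div_iff (by rw [← hxm]; exact hD.ne'), hPsi]
    -- divide key by u to get polynomial identity, then finish
    have key2 : (exp x) * (k0 * kcat + k0 * k1 * (exp x * exp dmu)
        + k1 * kcat * exp dmu) * pES x y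
        = (k0 * S * kcat + k0 * S * k1 * (exp x * exp dmu) + kcat * k1 * P) * pE x y := by
      have := key
      have h' : u * ((exp x) * (k0 * kcat + k0 * k1 * (exp x * exp dmu)
          + k1 * kcat * exp dmu) * pES x y)
          = u * ((k0 * S * kcat + k0 * S * k1 * (exp x * exp dmu) + kcat * k1 * P) * pE x y) := by
        linear_combination key
      exact mul_left_cancel₀ hupos.ne' h'
    linear_combination (-k0) * key2
  refine ⟨fun x y hy => (hmain x y hy).1, fun x y₁ y₂ h1 h2 => ?_⟩
  rw [(hmain x y₁ h1).1, (hmain x y₂ h2).1,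
    mul_div_cancel_left₀ _ (ne_of_gt (hmain x y₁ h1).2),
    mul_div_cancel_left₀ _ (ne_of_gt (hmain x y₂ h2).2)]
end

section
/- (Closed-form flux in Region II.) For every (x,y) with y ≥ x + Δμ + ΔGc, the flux satisfies Ψ(x,y) = (1 − R(x,y))·k0·k1·kcat·(S·e^(Δμ) − P)/(k0·kcat + k0·k1·e^(y−ΔGc) + k1·kcat·e^(Δμ)). In particular, in Region II the ratio Ψ(x,y)/(1 − R(x,y)) does not depend on x. -/
open Real Filter

/-- Closed-form flux in Region II: for `y ≥ x + Δμ + ΔGc`,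
`Ψ = (1 − R)·k0·k1·kcat·(S·e^Δμ − P)/(k0·kcat + k0·k1·e^(y−ΔGc) + k1·kcat·e^Δμ)`;
in particular `Ψ/(1 − R)` does not depend on `x` in Region II. -/
theorem stmt_13
    (k0 k1 kcat S P dmu dGc : ℝ)
    (hk0 : 0 < k0) (hk1 : 0 < k1) (hkcat : 0 < kcat) (hS : 0 < S) (hP : 0 < P)
    (pE pES pEP R Psi : ℝ → ℝ → ℝ)
    (hstat : ∀ x y : ℝ,
      IsStat (k0 * S) (k0 * exp x)
        (kcat * min 1 (exp (x - y + dmu + dGc)))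
        (kcat * exp dGc * min 1 (exp (y - x - dmu - dGc)))
        (k1 * exp y) (k1 * P)
        (pE x y) (pES x y) (pEP x y))
    (hR : ∀ x y : ℝ, R x y = pES x y + pEP x y)
    (hPsi : ∀ x y : ℝ, Psi x y = k0 * S * pE x y - k0 * exp x * pES x y)
    : (∀ x y : ℝ, y ≥ x + dmu + dGc →
        Psi x y = (1 - R x y) *
          (k0 * k1 * kcat * (S * exp dmu - P) /
            (k0 * kcat + k0 * k1 * exp (y - dGc) + k1 * kcat * exp dmu))) ∧
      (∀ y x₁ x₂ : ℝ, y ≥ x₁ + dmu + dGc → y ≥ x₂ + dmu + dGc →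
        Psi x₁ y / (1 - R x₁ y) = Psi x₂ y / (1 - R x₂ y)) := by
  -- notation
  have hden : ∀ y : ℝ, 0 < k0 * kcat + k0 * k1 * exp (y - dGc) + k1 * kcat * exp dmu := by
    intro y; positivity
  -- main closed form, plus positivity of 1 - R
  have key : ∀ x y : ℝ, y ≥ x + dmu + dGc →
      Psi x y = (1 - R x y) *
        (k0 * k1 * kcat * (S * exp dmu - P) /
          (k0 * kcat + k0 * k1 * exp (y - dGc) + k1 * kcat * exp dmu)) ∧
      0 < 1 - R x y := by
    intro x y hxy
    obtain ⟨hE, hES, hEP, hsum, h1, h2, h3⟩ := hstat x y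
    have hm1 : min 1 (exp (x - y + dmu + dGc)) = exp (x - y + dmu + dGc) :=
      min_eq_right (by rw [Real.exp_le_one_iff]; linarith)
    have hm2 : min 1 (exp (y - x - dmu - dGc)) = 1 :=
      min_eq_left (Real.one_le_exp (by linarith))
    rw [hm1, hm2, mul_one] at h2 h3
    -- positivity of pE
    have hpE : 0 < pE x y := by
      rcases hE.lt_or_eq with h | h
      · exact h
      · exfalso
        have hb : 0 < k0 * exp x := by positivity
        have hf : 0 < k1 * exp y := by positivity
        have h1' : k0 * exp x * pES x y + k1 * exp y * pEP x y = 0 := by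
          rw [← h1, ← h]; ring
        have hES0 : pES x y = 0 := by nlinarith
        have hEP0 : pEP x y = 0 := by nlinarith
        rw [← h, hES0, hEP0] at hsum; norm_num at hsum
    have h1R : 1 - R x y = pE x y := by rw [hR]; linarith
    refine ⟨?_, by rw [h1R]; exact hpE⟩
    -- exponential relations
    have ht : exp (x - y + dmu + dGc) * exp y = exp x * exp dmu * exp dGc := by
      rw [← Real.exp_add, ← Real.exp_add, ← Real.exp_add]; congr 1; ring
    have hq : exp (y - dGc) * exp dGc = exp y := by
      rw [← Real.exp_add]; congr 1; ring
    -- the multiplied identity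
    have keymul :
        (k0 * S * pE x y - k0 * exp x * pES x y) *
          (k0 * kcat + k0 * k1 * exp (y - dGc) + k1 * kcat * exp dmu) * (exp x * exp dGc)
        = pE x y * (k0 * k1 * kcat * (S * exp dmu - P)) * (exp x * exp dGc) := by
      linear_combination
        (-(k0 * exp x) * (kcat * exp dGc + k1 * exp y)) * h2 +
        (-(k0 * exp x * kcat * exp dGc)) * h3 +
        (k0 * k1 * kcat * S * pE x y -
          k1 * kcat * (k0 * S * pE x y - k0 * exp x * pES x y)) * ht +
        (k0 * k1 * exp x * (k0 * S * pE x y - k0 * exp x * pES x y)) * hq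
    have hne : exp x * exp dGc ≠ 0 := by positivity
    have keyc := mul_right_cancel₀ hne keymul
    rw [hPsi, h1R]
    rw [mul_div_assoc'] at *
    rw [eq_div_iff (hden y).ne']
    linarith [keyc]
  constructor
  · intro x y hxy; exact (key x y hxy).1
  · intro y x₁ x₂ h₁ h₂
    obtain ⟨e₁, p₁⟩ := key x₁ y h₁
    obtain ⟨e₂, p₂⟩ := key x₂ y h₂
    rw [e₁, e₂, mul_div_cancel_left₀ _ p₁.ne', mul_div_cancel_left₀ _ p₂.ne']
end

section
/- (Thermodynamic consistency of the flux.) For every (x,y) ∈ ℝ², the sign of the steady-state flux is determined by the thermodynamic drive alone: Ψ(x,y) > 0 if and only if S·e^(Δμ) > P (equivalently, if and only if ΔG = ln(P/S) − Δμ < 0); Ψ(x,y) = 0 if and only if S·e^(Δμ) = P; and Ψ(x,y) < 0 if and only if S·e^(Δμ) < P. -/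
open Real Filter

lemma min_exp_split (u : ℝ) : min 1 (exp u) = exp u * min 1 (exp (-u)) := by
  rcases le_total u 0 with h | h
  · rw [min_eq_right (Real.exp_le_one_iff.mpr h),
      min_eq_left (Real.one_le_exp (by linarith)), mul_one]
  · rw [min_eq_left (Real.one_le_exp h),
      min_eq_right (Real.exp_le_one_iff.mpr (by linarith)), ← Real.exp_add]
    simp

set_option maxHeartbeats 1000000 in
/-- Thermodynamic consistency: the sign of the steady-state flux is determined
by the thermodynamic drive alone. -/
theorem stmt_14
    (k0 k1 kcat S P dmu dGc : ℝ)
    (hk0 : 0 < k0) (hk1 : 0 < k1) (hkcat : 0 < kcat) (hS : 0 < S) (hP : 0 < P)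
    (pE pES pEP R Psi : ℝ → ℝ → ℝ)
    (hstat : ∀ x y : ℝ,
      IsStat (k0 * S) (k0 * exp x)
        (kcat * min 1 (exp (x - y + dmu + dGc)))
        (kcat * exp dGc * min 1 (exp (y - x - dmu - dGc)))
        (k1 * exp y) (k1 * P)
        (pE x y) (pES x y) (pEP x y))
    (hR : ∀ x y : ℝ, R x y = pES x y + pEP x y)
    (hPsi : ∀ x y : ℝ, Psi x y = k0 * S * pE x y - k0 * exp x * pES x y)
    : ∀ x y : ℝ,
      (0 < Psi x y ↔ P < S * exp dmu) ∧
      (P < S * exp dmu ↔ Real.log (P / S) - dmu < 0) ∧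
      (Psi x y = 0 ↔ S * exp dmu = P) ∧
      (Psi x y < 0 ↔ S * exp dmu < P) := by
  intro x y
  obtain ⟨hE0, hES0, hEP0, hsum, hbE, hbES, hbEP⟩ := hstat x y
  set a := k0 * S with ha
  set b := k0 * exp x with hb
  set c := kcat * min 1 (exp (x - y + dmu + dGc)) with hc
  set d := kcat * exp dGc * min 1 (exp (y - x - dmu - dGc)) with hd
  set f := k1 * exp y with hf
  set g := k1 * P with hg
  have hexp : ∀ u : ℝ, (0:ℝ) < exp u := fun u => Real.exp_pos u
  have hbpos : 0 < b := mul_pos hk0 (hexp x)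
  have hcpos : 0 < c := mul_pos hkcat (lt_min one_pos (hexp _))
  have hdpos : 0 < d := mul_pos (mul_pos hkcat (hexp dGc)) (lt_min one_pos (hexp _))
  have hfpos : 0 < f := mul_pos hk1 (hexp y)
  -- pE is strictly positive
  have hpE : 0 < pE x y := by
    rcases lt_or_eq_of_le hE0 with h | h
    · exact h
    · exfalso
      have h1 : b * pES x y + f * pEP x y = 0 := by rw [← hbE, ← h]; ring
      have h2 : pES x y = 0 ∧ pEP x y = 0 := by
        constructor <;> nlinarith [mul_nonneg hbpos.le hES0, mul_nonneg hfpos.le hEP0]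
      rw [← h, h2.1, h2.2] at hsum; norm_num at hsum
  -- key algebraic identity: Psi * (bf + cf + bd) = pE * (acf - bdg)
  have hPsi' := hPsi x y
  clear hstat hPsi hR hbE
  have key : Psi x y * (b * f + c * f + b * d)
      = pE x y * (a * c * f - b * d * g) := by
    have h2 : (b + c) * pES x y = a * pE x y + d * pEP x y := hbES
    have h3 : (d + f) * pEP x y = c * pES x y + g * pE x y := hbEP
    linear_combination (b * f + c * f + b * d) * hPsi'
      - b * (d + f) * h2 - b * d * h3
  -- the cycle affinity factorization
  have hmin : min 1 (exp (x - y + dmu + dGc))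
      = exp (x - y + dmu + dGc) * min 1 (exp (y - x - dmu - dGc)) := by
    have := min_exp_split (x - y + dmu + dGc)
    rwa [show -(x - y + dmu + dGc) = y - x - dmu - dGc by ring] at this
  set m := min 1 (exp (y - x - dmu - dGc)) with hm
  have hmpos : 0 < m := lt_min one_pos (hexp _)
  have hfact : a * c * f - b * d * g
      = (k0 * k1 * kcat * exp x * exp dGc * m) * (S * exp dmu - P) := by
    rw [ha, hc, hf, hb, hd, hg, hmin]
    have h1 : exp (x - y + dmu + dGc) * exp y = exp x * exp dmu * exp dGc := by
      rw [← Real.exp_add, ← Real.exp_add, ← Real.exp_add]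
      congr 1; ring
    linear_combination (k0 * S * kcat * m * k1) * h1
  have hKpos : 0 < k0 * k1 * kcat * exp x * exp dGc * m :=
    mul_pos (mul_pos (mul_pos (mul_pos (mul_pos hk0 hk1) hkcat) (hexp x)) (hexp dGc)) hmpos
  set c1 := b * f + c * f + b * d with hc1
  have hc1pos : 0 < c1 := by
    have := mul_pos hbpos hfpos
    have := mul_pos hcpos hfpos
    have := mul_pos hbpos hdpos
    rw [hc1]; linarith
  set c2 := pE x y * (k0 * k1 * kcat * exp x * exp dGc * m) with hc2
  have hc2pos : 0 < c2 := mul_pos hpE hKpos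
  have key2 : Psi x y * c1 = c2 * (S * exp dmu - P) := by
    rw [key, hfact, hc2]; ring
  refine ⟨?_, ?_, ?_, ?_⟩
  · constructor
    · intro h; nlinarith [mul_pos h hc1pos]
    · intro h; nlinarith [mul_pos hc2pos (sub_pos.mpr h)]
  · rw [sub_neg, Real.log_lt_iff_lt_exp (div_pos hP hS), div_lt_iff₀ hS]
    constructor <;> intro h <;> nlinarith
  · constructor
    · intro h; rw [h, zero_mul] at key2
      have : S * exp dmu - P = 0 := by
        rcases mul_eq_zero.mp key2.symm with h' | h'
        · exact absurd h' hc2pos.ne'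
        · exact h'
      linarith
    · intro h
      have : Psi x y * c1 = 0 := by rw [key2, h]; ring
      rcases mul_eq_zero.mp this with h' | h'
      · exact h'
      · exact absurd h' hc1pos.ne'
  · constructor
    · intro h; nlinarith [mul_pos (neg_pos.mpr h) hc1pos]
    · intro h
      have hneg : c2 * (S * exp dmu - P) < 0 :=
        mul_neg_of_pos_of_neg hc2pos (by linarith)
      nlinarith [key2, hneg, hc1pos]
end

section
/- In the non-diffusion-controlled three-state enzyme model, for every (x,y) ∈ ℝ² and every δ > 0, the sequestered fraction strictly decreases when both binding free energies are increased by δ: R(x + δ, y + δ) < R(x, y). -/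
open Real Filter

/-- `min 1 (exp (-t)) = exp (-t) * min 1 (exp t)`. -/
lemma min_exp_neg (t : ℝ) : min 1 (exp (-t)) = exp (-t) * min 1 (exp t) := by
  rcases le_total t 0 with h | h
  · have h1 : exp t ≤ 1 := by simpa using exp_le_exp.mpr h
    have h2 : (1:ℝ) ≤ exp (-t) := by simpa using exp_le_exp.mpr (by linarith : (0:ℝ) ≤ -t)
    rw [min_eq_left h2, min_eq_right h1, ← exp_add]
    simp
  · have h1 : (1:ℝ) ≤ exp t := by simpa using exp_le_exp.mpr h
    have h2 : exp (-t) ≤ 1 := by simpa using exp_le_exp.mpr (by linarith : -t ≤ (0:ℝ))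
    rw [min_eq_right h2, min_eq_left h1, mul_one]

/-- Shrink lemma: `exp (-δ) * min 1 (exp s) ≤ min 1 (exp t)` when `s ≤ t + δ` and `0 ≤ δ`. -/
lemma min_exp_shrink (δ s t : ℝ) (hδ : 0 ≤ δ) (h : s ≤ t + δ) :
    exp (-δ) * min 1 (exp s) ≤ min 1 (exp t) := by
  have hq : exp (-δ) ≤ 1 := by simpa using exp_le_exp.mpr (by linarith : -δ ≤ (0:ℝ))
  apply le_min
  · calc exp (-δ) * min 1 (exp s) ≤ exp (-δ) * 1 :=
          mul_le_mul_of_nonneg_left (min_le_left _ _) (exp_pos _).le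
      _ ≤ 1 := by linarith
  · calc exp (-δ) * min 1 (exp s) ≤ exp (-δ) * exp s :=
          mul_le_mul_of_nonneg_left (min_le_right _ _) (exp_pos _).le
      _ = exp (-δ + s) := (exp_add _ _).symm
      _ ≤ exp t := exp_le_exp.mpr (by linarith)

/-- From stationarity, the spanning-tree identities. -/
lemma stat_tree (a b c d f g pE pES pEP : ℝ) (h : IsStat a b c d f g pE pES pEP) :
    pES * (b*d+b*f+c*f) = (a*d+a*f+d*g) * pE ∧
    pEP * (b*d+b*f+c*f) = (a*c+c*g+b*g) * pE := by
  obtain ⟨-, -, -, -, h1, h2, -⟩ := h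
  constructor
  · linear_combination (-d) * h1 + f * h2
  · linear_combination (-(b+c)) * h1 + (-b) * h2

set_option maxHeartbeats 1000000 in
/-- The core algebraic inequality for the shifted chain. -/
lemma core_ineq (q a b c d f g a' b' f' g' : ℝ)
    (hq0 : 0 < q) (hq1 : q < 1)
    (ha : 0 < a) (hb : 0 < b) (hc : 0 < c) (hd : 0 < d) (hf : 0 < f) (hg : 0 < g)
    (ha' : 0 < a') (hb' : 0 < b') (hf' : 0 < f') (hg' : 0 < g')
    (hab : a' * b = q * (a * b')) (hfg : g' * f = q * (g * f'))
    (haa : a' ≤ a) (hbb : b ≤ b') (hff : f ≤ f') (hgg : g' ≤ g)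
    (hfq : q * f' ≤ f) (hbq : q * b' ≤ b) :
    (b*d+b*f+c*f) * (a'*d+a'*f'+d*g'+a'*c+c*g'+b'*g') <
      (b'*d+b'*f'+c*f') * (a*d+a*f+d*g+a*c+c*g+b*g) := by
  have hdc : (0:ℝ) < d * (d + c) := by positivity
  have K1 : a' * b ≤ a * b' := by
    rw [hab]
    nlinarith [mul_pos ha hb']
  have K5 : f * g' ≤ f' * g := by
    have h1 : f * g' = q * (g * f') := by linear_combination hfg
    rw [h1]
    nlinarith [mul_pos hg hf']
  have K2 : a' * b * f' ≤ a * b' * f := by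
    calc a' * b * f' = (a * b') * (q * f') := by linear_combination f' * hab
      _ ≤ (a * b') * f := mul_le_mul_of_nonneg_left hfq (mul_pos ha hb').le
      _ = a * b' * f := by ring
  have K4 : a' * b * f < a * b' * f' := by
    have h2 : q * f < f' := lt_of_lt_of_le (mul_lt_of_lt_one_left hf hq1) hff
    calc a' * b * f = (a * b') * (q * f) := by linear_combination f * hab
      _ < (a * b') * f' := mul_lt_mul_of_pos_left h2 (mul_pos ha hb')
      _ = a * b' * f' := by ring
  have K3 : b * f * g' ≤ b' * f' * g := by
    have h2 : q * b ≤ b' := le_trans (mul_le_of_le_one_left hb.le hq1.le) hbb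
    calc b * f * g' = (g * f') * (q * b) := by linear_combination b * hfg
      _ ≤ (g * f') * b' := mul_le_mul_of_nonneg_left h2 (mul_pos hg hf').le
      _ = b' * f' * g := by ring
  have K7 : f * b' * g' ≤ f' * g * b := by
    calc f * b' * g' = (g * f') * (q * b') := by linear_combination b' * hfg
      _ ≤ (g * f') * b := mul_le_mul_of_nonneg_left hbq (mul_pos hg hf').le
      _ = f' * g * b := by ring
  have K8 : a' * f ≤ a * f' := mul_le_mul haa hff hf.le ha.le
  have p1 : b*d*(a'*d+a'*c) ≤ b'*d*(a*d+a*c) := by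
    linarith [mul_le_mul_of_nonneg_left K1 hdc.le]
  have p2 : b*d*(a'*f'+b'*g') ≤ b'*d*(a*f+b*g) := by
    have h2 : b*b'*g' ≤ b*b'*g := mul_le_mul_of_nonneg_left hgg (mul_pos hb hb').le
    linarith [mul_le_mul_of_nonneg_left K2 hd.le, mul_le_mul_of_nonneg_left h2 hd.le]
  have p3 : b*d*(d*g'+c*g') ≤ b'*d*(d*g+c*g) := by
    have h1 : b*g' ≤ b'*g := mul_le_mul hbb hgg hg'.le hb'.le
    linarith [mul_le_mul_of_nonneg_left h1 hdc.le]
  have p4 : b*f*(a'*d+a'*c) < b'*f'*(a*d+a*c) := by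
    have h1 : (0:ℝ) < d + c := by positivity
    linarith [mul_lt_mul_of_pos_left K4 h1]
  have p5 : b*f*(a'*f'+b'*g') ≤ b'*f'*(a*f+b*g) := by
    linarith [mul_le_mul_of_nonneg_left K1 (mul_pos hf hf').le,
      mul_le_mul_of_nonneg_left K5 (mul_pos hb hb').le]
  have p6 : b*f*(d*g'+c*g') ≤ b'*f'*(d*g+c*g) := by
    linarith [mul_le_mul_of_nonneg_left K3 (by positivity : (0:ℝ) ≤ d + c)]
  have p7 : c*f*(a'*d+a'*c) ≤ c*f'*(a*d+a*c) := by
    linarith [mul_le_mul_of_nonneg_left K8 (by positivity : (0:ℝ) ≤ c*(d+c))]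
  have p8 : c*f*(a'*f'+b'*g') ≤ c*f'*(a*f+b*g) := by
    linarith [mul_le_mul_of_nonneg_left haa (by positivity : (0:ℝ) ≤ c*(f*f')),
      mul_le_mul_of_nonneg_left K7 hc.le]
  have p9 : c*f*(d*g'+c*g') ≤ c*f'*(d*g+c*g) := by
    linarith [mul_le_mul_of_nonneg_left K5 (by positivity : (0:ℝ) ≤ c*(d+c))]
  linarith [p1, p2, p3, p4, p5, p6, p7, p8, p9]

/-- Abstract final step: comparing sequestered fractions via tree weights. -/
lemma final_step (T T' r r' Rv Rv' : ℝ) (hT : 0 < T) (hT' : 0 < T')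
    (hr : 0 < r) (hr' : 0 < r')
    (hRr : Rv * (T + r) = r) (hRr' : Rv' * (T' + r') = r')
    (hcore : T * r' < T' * r) : Rv' < Rv := by
  have hcross : r' * (T + r) < r * (T' + r') := by nlinarith
  have key : Rv' * ((T + r) * (T' + r')) < Rv * ((T + r) * (T' + r')) := by
    have e1 : Rv' * ((T + r) * (T' + r')) = r' * (T + r) := by
      linear_combination (T + r) * hRr'
    have e2 : Rv * ((T + r) * (T' + r')) = r * (T' + r') := by
      linear_combination (T' + r') * hRr
    rw [e1, e2]; exact hcross
  exact lt_of_mul_lt_mul_right key (by positivity)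

set_option maxHeartbeats 1000000 in
/-- Non-diffusion-controlled model: increasing both binding free energies by
the same `δ > 0` strictly decreases the sequestered fraction. -/
theorem stmt_15
    (k0 k1 kcat S P dmu dGc E1 E2 : ℝ)
    (hk0 : 0 < k0) (hk1 : 0 < k1) (hkcat : 0 < kcat) (hS : 0 < S) (hP : 0 < P)
    (pE pES pEP R Psi : ℝ → ℝ → ℝ)
    (hstat : ∀ x y : ℝ,
      IsStat (k0 * S * min 1 (exp (-(x - E1)))) (k0 * exp E1 * min 1 (exp (x - E1)))
        (kcat * min 1 (exp (x - y + dmu + dGc)))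
        (kcat * exp dGc * min 1 (exp (y - x - dmu - dGc)))
        (k1 * exp E2 * min 1 (exp (y - E2))) (k1 * P * min 1 (exp (-(y - E2))))
        (pE x y) (pES x y) (pEP x y))
    (hR : ∀ x y : ℝ, R x y = pES x y + pEP x y)
    (hPsi : ∀ x y : ℝ, Psi x y =
      k0 * S * min 1 (exp (-(x - E1))) * pE x y -
        k0 * exp E1 * min 1 (exp (x - E1)) * pES x y)
    : ∀ x y δ : ℝ, 0 < δ → R (x + δ) (y + δ) < R x y := by
  intro x y δ hδ
  have hst := hstat x y
  have hst' := hstat (x + δ) (y + δ)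
  rw [show x + δ - (y + δ) + dmu + dGc = x - y + dmu + dGc from by ring,
      show y + δ - (x + δ) - dmu - dGc = y - x - dmu - dGc from by ring] at hst'
  set a := k0 * S * min 1 (exp (-(x - E1))) with ha_def
  set b := k0 * exp E1 * min 1 (exp (x - E1)) with hb_def
  set c := kcat * min 1 (exp (x - y + dmu + dGc)) with hc_def
  set d := kcat * exp dGc * min 1 (exp (y - x - dmu - dGc)) with hd_def
  set f := k1 * exp E2 * min 1 (exp (y - E2)) with hf_def
  set g := k1 * P * min 1 (exp (-(y - E2))) with hg_def
  set a' := k0 * S * min 1 (exp (-(x + δ - E1))) with ha'_def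
  set b' := k0 * exp E1 * min 1 (exp (x + δ - E1)) with hb'_def
  set f' := k1 * exp E2 * min 1 (exp (y + δ - E2)) with hf'_def
  set g' := k1 * P * min 1 (exp (-(y + δ - E2))) with hg'_def
  have ha : 0 < a := by rw [ha_def]; positivity
  have hb : 0 < b := by rw [hb_def]; positivity
  have hc : 0 < c := by rw [hc_def]; positivity
  have hd : 0 < d := by rw [hd_def]; positivity
  have hf : 0 < f := by rw [hf_def]; positivity
  have hg : 0 < g := by rw [hg_def]; positivity
  have ha' : 0 < a' := by rw [ha'_def]; positivity
  have hb' : 0 < b' := by rw [hb'_def]; positivity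
  have hf' : 0 < f' := by rw [hf'_def]; positivity
  have hg' : 0 < g' := by rw [hg'_def]; positivity
  set q := exp (-δ) with hq_def
  have hq0 : 0 < q := exp_pos _
  have hq1 : q < 1 := by
    rw [hq_def]
    calc exp (-δ) < exp 0 := exp_lt_exp.mpr (by linarith)
      _ = 1 := exp_zero
  have hab : a' * b = q * (a * b') := by
    rw [ha'_def, hb_def, hq_def, ha_def, hb'_def, min_exp_neg (x + δ - E1), min_exp_neg (x - E1)]
    have h3 : exp (-(x + δ - E1)) = exp (-δ) * exp (-(x - E1)) := by
      rw [← exp_add]; ring_nf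
    rw [h3]; ring
  have hfg : g' * f = q * (g * f') := by
    rw [hg'_def, hf_def, hq_def, hg_def, hf'_def, min_exp_neg (y + δ - E2), min_exp_neg (y - E2)]
    have h3 : exp (-(y + δ - E2)) = exp (-δ) * exp (-(y - E2)) := by
      rw [← exp_add]; ring_nf
    rw [h3]; ring
  have haa : a' ≤ a := by
    rw [ha'_def, ha_def]
    exact mul_le_mul_of_nonneg_left
      (min_le_min le_rfl (exp_le_exp.mpr (by linarith))) (by positivity)
  have hbb : b ≤ b' := by
    rw [hb_def, hb'_def]
    exact mul_le_mul_of_nonneg_left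
      (min_le_min le_rfl (exp_le_exp.mpr (by linarith))) (by positivity)
  have hff : f ≤ f' := by
    rw [hf_def, hf'_def]
    exact mul_le_mul_of_nonneg_left
      (min_le_min le_rfl (exp_le_exp.mpr (by linarith))) (by positivity)
  have hgg : g' ≤ g := by
    rw [hg'_def, hg_def]
    exact mul_le_mul_of_nonneg_left
      (min_le_min le_rfl (exp_le_exp.mpr (by linarith))) (by positivity)
  have hfq : q * f' ≤ f := by
    rw [hq_def, hf'_def, hf_def]
    have h1 := min_exp_shrink δ (y + δ - E2) (y - E2) hδ.le (by linarith)
    have h2 := mul_le_mul_of_nonneg_left h1 (by positivity : (0:ℝ) ≤ k1 * exp E2)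
    linarith [h2]
  have hbq : q * b' ≤ b := by
    rw [hq_def, hb'_def, hb_def]
    have h1 := min_exp_shrink δ (x + δ - E1) (x - E1) hδ.le (by linarith)
    have h2 := mul_le_mul_of_nonneg_left h1 (by positivity : (0:ℝ) ≤ k0 * exp E1)
    linarith [h2]
  have core := core_ineq q a b c d f g a' b' f' g' hq0 hq1 ha hb hc hd hf hg ha' hb' hf' hg'
    hab hfg haa hbb hff hgg hfq hbq
  obtain ⟨e1, e2⟩ := stat_tree _ _ _ _ _ _ _ _ _ hst
  obtain ⟨e1', e2'⟩ := stat_tree _ _ _ _ _ _ _ _ _ hst'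
  obtain ⟨-, -, -, hsum, -, -, -⟩ := hst
  obtain ⟨-, -, -, hsum', -, -, -⟩ := hst'
  have hRxy : R x y * ((b*d+b*f+c*f) + (a*d+a*f+d*g+a*c+c*g+b*g)) =
      (a*d+a*f+d*g+a*c+c*g+b*g) := by
    rw [hR]
    linear_combination e1 + e2 + (a*d+a*f+d*g+a*c+c*g+b*g) * hsum
  have hRxy' : R (x + δ) (y + δ) * ((b'*d+b'*f'+c*f') + (a'*d+a'*f'+d*g'+a'*c+c*g'+b'*g')) =
      (a'*d+a'*f'+d*g'+a'*c+c*g'+b'*g') := by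
    rw [hR]
    linear_combination e1' + e2' + (a'*d+a'*f'+d*g'+a'*c+c*g'+b'*g') * hsum'
  have hTE : (0:ℝ) < b*d+b*f+c*f := by positivity
  have hTE' : (0:ℝ) < b'*d+b'*f'+c*f' := by positivity
  have hr1 : (0:ℝ) < a*d+a*f+d*g+a*c+c*g+b*g := by positivity
  have hr2 : (0:ℝ) < a'*d+a'*f'+d*g'+a'*c+c*g'+b'*g' := by positivity
  exact final_step _ _ _ _ _ _ hTE hTE' hr1 hr2 hRxy hRxy' core
end

section
/- (Regions I and VI behaviour, non-diffusion model.) Fix x ∈ ℝ and let y₁ < y₂ satisfy y₂ ≤ E2 and y₂ ≤ x + Δμ + ΔGc (so product binding is diffusion-limited and the catalytic step is backwards labile at both points). Then R(x, y₂) < R(x, y₁); if moreover S·e^(Δμ) > P, then Ψ(x, y₂) > Ψ(x, y₁). -/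
open Real Filter

lemma stat_eq (a b c d f g pE pES pEP : ℝ)
    (ha : 0 < a) (hb : 0 < b) (hc : 0 < c) (hd : 0 < d) (hf : 0 < f) (hg : 0 < g)
    (h : IsStat a b c d f g pE pES pEP) :
    pE = (b*d + b*f + c*f) / (b*d + b*f + c*f + (a*d + a*f + d*g) + (a*c + c*g + b*g)) ∧
    pES = (a*d + a*f + d*g) / (b*d + b*f + c*f + (a*d + a*f + d*g) + (a*c + c*g + b*g)) ∧
    pEP = (a*c + c*g + b*g) / (b*d + b*f + c*f + (a*d + a*f + d*g) + (a*c + c*g + b*g)) := by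
  obtain ⟨_, _, _, hsum, h1, h2, h3⟩ := h
  set A := b*d + b*f + c*f with hA'
  set B := a*d + a*f + d*g with hB'
  set C := a*c + c*g + b*g with hC'
  have hA : 0 < A := by positivity
  have hT : 0 < A + B + C := by positivity
  have e2 : A * pES = B * pE := by rw [hA', hB']; linear_combination (d+f)*h2 + d*h3
  have e3 : A * pEP = C * pE := by rw [hA', hC']; linear_combination (b+c)*h3 + c*h2
  have hTE : (A + B + C) * pE = A := by linear_combination A*hsum - e2 - e3
  refine ⟨?_, ?_, ?_⟩
  · field_simp; linarith [hTE]
  · field_simp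
    have h4 : A * (pES * (A + B + C)) = A * B := by linear_combination (A+B+C)*e2 + B*hTE
    exact mul_left_cancel₀ hA.ne' h4
  · field_simp
    have h4 : A * (pEP * (A + B + C)) = A * C := by linear_combination (A+B+C)*e3 + C*hTE
    exact mul_left_cancel₀ hA.ne' h4

/-- Regions I and VI behaviour (non-diffusion model): for fixed `x`, with
product binding diffusion-limited (`y ≤ E2`) and the catalytic step backwards
labile (`y ≤ x + Δμ + ΔGc`), increasing `ΔG_EP` strictly decreases the
sequestered fraction and, when `S·e^Δμ > P`, strictly increases the flux. -/
theorem stmt_17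
    (k0 k1 kcat S P dmu dGc E1 E2 : ℝ)
    (hk0 : 0 < k0) (hk1 : 0 < k1) (hkcat : 0 < kcat) (hS : 0 < S) (hP : 0 < P)
    (pE pES pEP R Psi : ℝ → ℝ → ℝ)
    (hstat : ∀ x y : ℝ,
      IsStat (k0 * S * min 1 (exp (-(x - E1)))) (k0 * exp E1 * min 1 (exp (x - E1)))
        (kcat * min 1 (exp (x - y + dmu + dGc)))
        (kcat * exp dGc * min 1 (exp (y - x - dmu - dGc)))
        (k1 * exp E2 * min 1 (exp (y - E2))) (k1 * P * min 1 (exp (-(y - E2))))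
        (pE x y) (pES x y) (pEP x y))
    (hR : ∀ x y : ℝ, R x y = pES x y + pEP x y)
    (hPsi : ∀ x y : ℝ, Psi x y =
      k0 * S * min 1 (exp (-(x - E1))) * pE x y -
        k0 * exp E1 * min 1 (exp (x - E1)) * pES x y)
    (x y₁ y₂ : ℝ) (hy : y₁ < y₂) (hE2 : y₂ ≤ E2) (hreg : y₂ ≤ x + dmu + dGc) :
    R x y₂ < R x y₁ ∧ (S * exp dmu > P → Psi x y₂ > Psi x y₁) := by
  set a := k0 * S * min 1 (exp (-(x - E1))) with ha'
  set b := k0 * exp E1 * min 1 (exp (x - E1)) with hb'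
  set D := kcat * exp (-x - dmu) with hD'
  set g := k1 * P with hg'
  set t₁ := exp y₁ with ht₁'
  set t₂ := exp y₂ with ht₂'
  have ha : 0 < a := by rw [ha']; positivity
  have hb : 0 < b := by rw [hb']; positivity
  have hD : 0 < D := by rw [hD']; positivity
  have hg : 0 < g := by rw [hg']; positivity
  have ht1 : 0 < t₁ := exp_pos _
  have ht2 : 0 < t₂ := exp_pos _
  have ht : t₁ < t₂ := exp_lt_exp.2 hy
  clear_value a b D g t₁ t₂
  -- simplify the rates
  have hcr : ∀ y : ℝ, y ≤ x + dmu + dGc →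
      kcat * min 1 (exp (x - y + dmu + dGc)) = kcat := by
    intro y hy'
    rw [min_eq_left (one_le_exp (by linarith)), mul_one]
  have hdr : ∀ y : ℝ, y ≤ x + dmu + dGc →
      kcat * exp dGc * min 1 (exp (y - x - dmu - dGc)) = D * exp y := by
    intro y hy'
    rw [min_eq_right (exp_le_one_iff.2 (by linarith)), hD', mul_assoc, mul_assoc,
      ← exp_add, ← exp_add, show dGc + (y - x - dmu - dGc) = -x - dmu + y by ring]
  have hfr : ∀ y : ℝ, y ≤ E2 → k1 * exp E2 * min 1 (exp (y - E2)) = k1 * exp y := by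
    intro y hy'
    rw [min_eq_right (exp_le_one_iff.2 (by linarith)), mul_assoc, ← exp_add,
      show E2 + (y - E2) = y by ring]
  have hgr : ∀ y : ℝ, y ≤ E2 → g * min 1 (exp (-(y - E2))) = g := by
    intro y hy'
    rw [min_eq_left (one_le_exp (by linarith)), mul_one]
  have H1 := hstat x y₁
  rw [hcr y₁ (by linarith), hdr y₁ (by linarith), hfr y₁ (by linarith),
    hgr y₁ (by linarith), ← ha', ← hb', ← ht₁'] at H1
  have H2 := hstat x y₂
  rw [hcr y₂ (by linarith), hdr y₂ (by linarith), hfr y₂ (by linarith),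
    hgr y₂ (by linarith), ← ha', ← hb', ← ht₂'] at H2
  obtain ⟨hE1, hES1, hEP1⟩ := stat_eq _ _ _ _ _ _ _ _ _ ha hb hkcat
    (by positivity) (by positivity) hg H1
  obtain ⟨hE2', hES2, hEP2⟩ := stat_eq _ _ _ _ _ _ _ _ _ ha hb hkcat
    (by positivity) (by positivity) hg H2
  -- abbreviations for numerators
  set M := b*D + b*k1 + kcat*k1 with hM'
  set N := a*D + a*k1 + D*g with hN'
  set C := a*kcat + kcat*g + b*g with hC'
  have hM : 0 < M := by rw [hM']; positivity
  have hN : 0 < N := by rw [hN']; positivity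
  have hC : 0 < C := by rw [hC']; positivity
  clear_value M N C
  have hT1 : 0 < M*t₁ + N*t₁ + C := by positivity
  have hT2 : 0 < M*t₂ + N*t₂ + C := by positivity
  have hden1 : b*(D*t₁) + b*(k1*t₁) + kcat*(k1*t₁) +
      (a*(D*t₁) + a*(k1*t₁) + D*t₁*g) + C
      = M*t₁ + N*t₁ + C := by rw [hM', hN']; ring
  have hden2 : b*(D*t₂) + b*(k1*t₂) + kcat*(k1*t₂) +
      (a*(D*t₂) + a*(k1*t₂) + D*t₂*g) + C
      = M*t₂ + N*t₂ + C := by rw [hM', hN']; ring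
  rw [hden1] at hE1 hES1 hEP1
  rw [hden2] at hE2' hES2 hEP2
  have hR1 : R x y₁ = (N*t₁ + C) / (M*t₁ + N*t₁ + C) := by
    rw [hR, hES1, hEP1, ← add_div]
    congr 1; rw [hN', hC']; ring
  have hR2 : R x y₂ = (N*t₂ + C) / (M*t₂ + N*t₂ + C) := by
    rw [hR, hES2, hEP2, ← add_div]
    congr 1; rw [hN', hC']; ring
  constructor
  · rw [hR1, hR2, div_lt_div_iff₀ hT2 hT1]
    have key : 0 < M * C * (t₂ - t₁) := mul_pos (mul_pos hM hC) (sub_pos.2 ht)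
    clear hstat hPsi hR H1 H2 hE1 hES1 hEP1 hE2' hES2 hEP2 hR1 hR2 hcr hdr hfr hgr
      ha' hb' hD' hg' ht₁' ht₂' hC' hN' hM' hden1 hden2
    nlinarith [key]
  · intro hSP
    -- key identity: a * exp x = b * S
    have hab : a * exp x = b * S := by
      rcases le_total x E1 with h | h
      · rw [ha', hb', min_eq_left (one_le_exp (by linarith)),
          min_eq_right (exp_le_one_iff.2 (by linarith)), mul_one]
        rw [show k0 * exp E1 * exp (x - E1) * S = k0 * S * (exp E1 * exp (x - E1)) by ring,
          ← exp_add, show E1 + (x - E1) = x by ring]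
      · rw [ha', hb', min_eq_right (exp_le_one_iff.2 (by linarith)),
          min_eq_left (one_le_exp (by linarith)), mul_one]
        rw [show k0 * S * exp (-(x - E1)) * exp x = k0 * S * (exp (-(x-E1)) * exp x) by ring,
          ← exp_add, show -(x - E1) + x = E1 by ring]
        ring
    have hinv : exp (-x - dmu) * (exp x * exp dmu) = 1 := by
      rw [← exp_add, ← exp_add, show -x - dmu + (x + dmu) = (0:ℝ) by ring, exp_zero]
    have h1 : b * P < a * exp x * exp dmu := by
      rw [hab]
      calc b * P < b * (S * exp dmu) := mul_lt_mul_of_pos_left hSP hb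
        _ = b * S * exp dmu := by ring
    have hK : 0 < a * kcat * k1 - b * D * k1 * P := by
      have h2 := mul_lt_mul_of_pos_left h1 (by positivity :
        (0:ℝ) < kcat * k1 * exp (-x - dmu))
      have h3 : kcat * k1 * exp (-x - dmu) * (a * exp x * exp dmu) = a * kcat * k1 := by
        calc kcat * k1 * exp (-x - dmu) * (a * exp x * exp dmu)
            = a * kcat * k1 * (exp (-x - dmu) * (exp x * exp dmu)) := by ring
          _ = a * kcat * k1 := by rw [hinv, mul_one]
      rw [h3] at h2
      rw [hD']
      linarith [h2]
    have hP1 : Psi x y₁ = (a*kcat*k1 - b*D*k1*P) * t₁ / (M*t₁ + N*t₁ + C) := by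
      rw [hPsi, ← ha', ← hb', hE1, hES1]
      field_simp
      rw [hg']; ring
    have hP2 : Psi x y₂ = (a*kcat*k1 - b*D*k1*P) * t₂ / (M*t₂ + N*t₂ + C) := by
      rw [hPsi, ← ha', ← hb', hE2', hES2]
      field_simp
      rw [hg']; ring
    rw [hP1, hP2, gt_iff_lt, div_lt_div_iff₀ hT1 hT2]
    have key : 0 < (a * kcat * k1 - b * D * k1 * P) * C * (t₂ - t₁) :=
      mul_pos (mul_pos hK hC) (sub_pos.2 ht)
    clear hstat hPsi hR H1 H2 hE1 hES1 hEP1 hE2' hES2 hEP2 hR1 hR2 hcr hdr hfr hgr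
      ha' hb' hD' hg' ht₁' ht₂' hC' hN' hM' hden1 hden2 hP1 hP2 hab hinv h1
    nlinarith [key]
end

section
/- In the non-diffusion-controlled three-state enzyme model, for every fixed offset w ∈ ℝ, along the line y = x + w one has: lim_{x→∞} π_E(x, x + w) = 1 (equivalently lim_{x→∞} R(x, x + w) = 0), lim_{x→∞} Ψ(x, x + w) = 0, and there exist constants C > 0 and x₀ ∈ ℝ such that |Ψ(x, x + w)| ≤ C·e^(−x) for all x ≥ x₀. -/
open Real Filter

/-- Non-diffusion model: along any line `y = x + w`, as `x → ∞` one has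
`π_E → 1` (equivalently `R → 0`), `Ψ → 0`, and `|Ψ(x, x+w)| ≤ C·e^(−x)`
eventually. -/
theorem stmt_18
    (k0 k1 kcat S P dmu dGc E1 E2 : ℝ)
    (hk0 : 0 < k0) (hk1 : 0 < k1) (hkcat : 0 < kcat) (hS : 0 < S) (hP : 0 < P)
    (pE pES pEP R Psi : ℝ → ℝ → ℝ)
    (hstat : ∀ x y : ℝ,
      IsStat (k0 * S * min 1 (exp (-(x - E1)))) (k0 * exp E1 * min 1 (exp (x - E1)))
        (kcat * min 1 (exp (x - y + dmu + dGc)))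
        (kcat * exp dGc * min 1 (exp (y - x - dmu - dGc)))
        (k1 * exp E2 * min 1 (exp (y - E2))) (k1 * P * min 1 (exp (-(y - E2))))
        (pE x y) (pES x y) (pEP x y))
    (hR : ∀ x y : ℝ, R x y = pES x y + pEP x y)
    (hPsi : ∀ x y : ℝ, Psi x y =
      k0 * S * min 1 (exp (-(x - E1))) * pE x y -
        k0 * exp E1 * min 1 (exp (x - E1)) * pES x y)
    (w : ℝ) :
    Tendsto (fun x : ℝ => pE x (x + w)) atTop (nhds 1) ∧
    Tendsto (fun x : ℝ => R x (x + w)) atTop (nhds 0) ∧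
    Tendsto (fun x : ℝ => Psi x (x + w)) atTop (nhds 0) ∧
    ∃ C : ℝ, 0 < C ∧ ∃ x₀ : ℝ, ∀ x : ℝ, x₀ ≤ x → |Psi x (x + w)| ≤ C * exp (-x) := by
  obtain ⟨x₀, hx₀def⟩ : ∃ t : ℝ, t = max E1 (E2 - w) := ⟨_, rfl⟩
  obtain ⟨m, hmdef⟩ : ∃ t : ℝ, t = min (k0 * exp E1) (k1 * exp E2) := ⟨_, rfl⟩
  have hmpos : 0 < m := by rw [hmdef]; exact lt_min (by positivity) (by positivity)
  have hm1 : m ≤ k0 * exp E1 := by rw [hmdef]; exact min_le_left _ _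
  have hm2 : m ≤ k1 * exp E2 := by rw [hmdef]; exact min_le_right _ _
  obtain ⟨K, hKdef⟩ : ∃ t : ℝ, t = k0 * S * exp E1 + k1 * P * exp (E2 - w) := ⟨_, rfl⟩
  have hKpos : 0 < K := by rw [hKdef]; positivity
  obtain ⟨C, hCdef⟩ : ∃ t : ℝ, t = K + k0 * exp E1 * (K / m) := ⟨_, rfl⟩
  have hCpos : 0 < C := by
    rw [hCdef]
    have : 0 < K / m := div_pos hKpos hmpos
    positivity
  -- key pointwise bounds for x ≥ x₀
  have key : ∀ x : ℝ, x₀ ≤ x →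
      R x (x + w) ≤ (K / m) * exp (-x) ∧
      |Psi x (x + w)| ≤ C * exp (-x) := by
    intro x hx
    obtain ⟨hpE, hpES, hpEP, hsum, hb1, _, _⟩ := hstat x (x + w)
    rw [hx₀def] at hx
    have hx1 : E1 ≤ x := le_trans (le_max_left _ _) hx
    have hx2 : E2 ≤ x + w := by
      have := le_trans (le_max_right _ _) hx; linarith
    have ha : min 1 (exp (-(x - E1))) = exp (-(x - E1)) :=
      min_eq_right (exp_le_one_iff.mpr (by linarith))
    have hb : min 1 (exp (x - E1)) = 1 :=
      min_eq_left (one_le_exp (by linarith))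
    have hf : min 1 (exp (x + w - E2)) = 1 :=
      min_eq_left (one_le_exp (by linarith))
    have hg : min 1 (exp (-(x + w - E2))) = exp (-(x + w - E2)) :=
      min_eq_right (exp_le_one_iff.mpr (by linarith))
    rw [ha, hb, hf, hg] at hb1
    have hea : exp (-(x - E1)) = exp E1 * exp (-x) := by
      rw [← exp_add]; ring_nf
    have heg : exp (-(x + w - E2)) = exp (E2 - w) * exp (-x) := by
      rw [← exp_add]; ring_nf
    have hpE1 : pE x (x + w) ≤ 1 := by linarith
    have hexpos : (0:ℝ) < exp (-x) := exp_pos _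
    -- m * (pES + pEP) ≤ (a+g) * pE ≤ a + g = K * exp (-x)
    have hbal : m * (pES x (x + w) + pEP x (x + w)) ≤ K * exp (-x) := by
      have h1 : m * (pES x (x + w) + pEP x (x + w)) ≤
          k0 * exp E1 * pES x (x + w) + k1 * exp E2 * pEP x (x + w) := by
        nlinarith
      have h2 : (k0 * S * exp (-(x - E1)) + k1 * P * exp (-(x + w - E2))) *
          pE x (x + w) ≤ K * exp (-x) := by
        rw [hea, heg]
        have hag : 0 ≤ k0 * S * (exp E1 * exp (-x)) + k1 * P * (exp (E2 - w) * exp (-x)) := by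
          positivity
        calc (k0 * S * (exp E1 * exp (-x)) + k1 * P * (exp (E2 - w) * exp (-x))) * pE x (x + w)
            ≤ (k0 * S * (exp E1 * exp (-x)) + k1 * P * (exp (E2 - w) * exp (-x))) * 1 :=
              mul_le_mul_of_nonneg_left hpE1 hag
          _ = K * exp (-x) := by rw [hKdef]; ring
      calc m * (pES x (x + w) + pEP x (x + w))
          ≤ k0 * exp E1 * pES x (x + w) + k1 * exp E2 * pEP x (x + w) := h1
        _ = k0 * exp E1 * 1 * pES x (x + w) + k1 * exp E2 * 1 * pEP x (x + w) := by ring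
        _ = (k0 * S * exp (-(x - E1)) + k1 * P * exp (-(x + w - E2))) * pE x (x + w) := hb1.symm
        _ ≤ K * exp (-x) := h2
    have hRbd : R x (x + w) ≤ (K / m) * exp (-x) := by
      rw [hR, div_mul_eq_mul_div, le_div_iff₀ hmpos]
      calc (pES x (x + w) + pEP x (x + w)) * m
          = m * (pES x (x + w) + pEP x (x + w)) := by ring
        _ ≤ K * exp (-x) := hbal
    refine ⟨hRbd, ?_⟩
    rw [hPsi, ha, hb]
    -- bound on a-term
    have haK : k0 * S * exp (-(x - E1)) ≤ K * exp (-x) := by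
      rw [hea, hKdef]
      have h0 : 0 ≤ k1 * P * exp (E2 - w) * exp (-x) := by positivity
      have he : (k0 * S * exp E1 + k1 * P * exp (E2 - w)) * exp (-x)
          = k0 * S * (exp E1 * exp (-x)) + k1 * P * exp (E2 - w) * exp (-x) := by ring
      linarith
    have haE : k0 * S * exp (-(x - E1)) * pE x (x + w) ≤ K * exp (-x) := by
      have h0 : 0 ≤ k0 * S * exp (-(x - E1)) := by positivity
      calc k0 * S * exp (-(x - E1)) * pE x (x + w)
          ≤ k0 * S * exp (-(x - E1)) * 1 := mul_le_mul_of_nonneg_left hpE1 h0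
        _ = k0 * S * exp (-(x - E1)) := mul_one _
        _ ≤ K * exp (-x) := haK
    -- bound on b-term
    have hpESbd : pES x (x + w) ≤ (K / m) * exp (-x) := by
      have := hRbd; rw [hR] at this; linarith
    have hbS : k0 * exp E1 * pES x (x + w) ≤ k0 * exp E1 * ((K / m) * exp (-x)) :=
      mul_le_mul_of_nonneg_left hpESbd (by positivity)
    have haEnn : 0 ≤ k0 * S * exp (-(x - E1)) * pE x (x + w) := by positivity
    have hbSnn : 0 ≤ k0 * exp E1 * pES x (x + w) := by positivity
    have hCx : C * exp (-x) = K * exp (-x) + k0 * exp E1 * ((K / m) * exp (-x)) := by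
      rw [hCdef]; ring
    have hKx : 0 ≤ K * exp (-x) := by positivity
    have hBx : 0 ≤ k0 * exp E1 * ((K / m) * exp (-x)) := by
      have : 0 ≤ K / m := le_of_lt (div_pos hKpos hmpos)
      positivity
    rw [abs_le]
    constructor
    · have : k0 * exp E1 * 1 * pES x (x + w) = k0 * exp E1 * pES x (x + w) := by ring
      rw [this]; linarith
    · have : k0 * exp E1 * 1 * pES x (x + w) = k0 * exp E1 * pES x (x + w) := by ring
      rw [this]; linarith
  -- limits
  have hexp0 : Tendsto (fun x : ℝ => exp (-x)) atTop (nhds 0) :=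
    Real.tendsto_exp_neg_atTop_nhds_zero
  have hKm0 : Tendsto (fun x : ℝ => (K / m) * exp (-x)) atTop (nhds 0) := by
    simpa using hexp0.const_mul (K / m)
  have hC0 : Tendsto (fun x : ℝ => C * exp (-x)) atTop (nhds 0) := by
    simpa using hexp0.const_mul C
  have hnC0 : Tendsto (fun x : ℝ => -(C * exp (-x))) atTop (nhds 0) := by
    simpa using hC0.neg
  have hRnonneg : ∀ x : ℝ, 0 ≤ R x (x + w) := by
    intro x
    obtain ⟨_, hpES, hpEP, _, _, _, _⟩ := hstat x (x + w)
    rw [hR]; linarith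
  have tR : Tendsto (fun x : ℝ => R x (x + w)) atTop (nhds 0) := by
    refine tendsto_of_tendsto_of_tendsto_of_le_of_le' tendsto_const_nhds hKm0
      (Eventually.of_forall fun x => hRnonneg x) ?_
    filter_upwards [eventually_ge_atTop x₀] with x hx
    exact (key x hx).1
  have tpE : Tendsto (fun x : ℝ => pE x (x + w)) atTop (nhds 1) := by
    have heq : ∀ x : ℝ, pE x (x + w) = 1 - R x (x + w) := by
      intro x
      obtain ⟨_, _, _, hsum, _, _, _⟩ := hstat x (x + w)
      rw [hR]; linarith
    simp only [heq]
    simpa using tendsto_const_nhds.sub tR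
  have tPsi : Tendsto (fun x : ℝ => Psi x (x + w)) atTop (nhds 0) := by
    refine tendsto_of_tendsto_of_tendsto_of_le_of_le' hnC0 hC0 ?_ ?_
    · filter_upwards [eventually_ge_atTop x₀] with x hx
      exact (abs_le.mp (key x hx).2).1
    · filter_upwards [eventually_ge_atTop x₀] with x hx
      exact (abs_le.mp (key x hx).2).2
  exact ⟨tpE, tR, tPsi, C, hCpos, x₀, fun x hx => (key x hx).2⟩
end
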